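/- arXiv:1709.04773 — 5 statements merged into one kernel-verified Lean document; each statement's English description precedes it below -/
import Mathlib

section
/- Let G be a connected graph of diameter 2 and let e = uw be an edge of G. Then B'(e) = 2 + 2·Σ_{v ∈ N(w), v ∉ N(u), v ≠ u} 1/|N(u) ∩ N(v)| + 2·Σ_{v ∈ N(u), v ∉ N(w), v ≠ w} 1/|N(w) ∩ N(v)|. -/
open SimpleGraph Finset

/-- The number of shortest paths between `x` and `y` in `G`. -/
noncomputable def numShortestPaths {V : Type*} (G : SimpleGraph V) (x y : V) : ℕ :=
  Nat.card {p : G.Walk x y // p.length = G.dist x y}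

/-- The number of shortest paths between `x` and `y` in `G` that contain the edge `e`. -/
noncomputable def numShortestPathsThru {V : Type*} (G : SimpleGraph V) (x y : V)
    (e : Sym2 V) : ℕ :=
  Nat.card {p : G.Walk x y // p.length = G.dist x y ∧ e ∈ p.edges}

open Classical in
/-- The edge betweenness centrality of `e`: the sum over ordered pairs of distinct
vertices `(x, y)` of the fraction of shortest `x`-`y` paths containing `e`. -/
noncomputable def edgeBetweenness {V : Type*} [Fintype V] (G : SimpleGraph V)
    (e : Sym2 V) : ℚ :=
  ∑ x : V, ∑ y : V, if x = y then 0 else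
    (numShortestPathsThru G x y e : ℚ) / (numShortestPaths G x y)

section Aux
variable {V : Type*} {G : SimpleGraph V}

lemma len1_eq {x y : V} (p : G.Walk x y) (hp : p.length = 1) :
    ∃ h : G.Adj x y, p = Walk.cons h Walk.nil := by
  cases p with
  | nil => simp at hp
  | cons h q =>
    cases q with
    | nil => exact ⟨h, rfl⟩
    | cons h' q' => simp [Walk.length_cons] at hp

lemma len2_eq {x y : V} (p : G.Walk x y) (hp : p.length = 2) :
    ∃ (m : V) (h1 : G.Adj x m) (h2 : G.Adj m y),
      p = Walk.cons h1 (Walk.cons h2 Walk.nil) := by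
  cases p with
  | nil => simp at hp
  | cons h q =>
    cases q with
    | nil => simp at hp
    | cons h' q' =>
      cases q' with
      | nil => exact ⟨_, h, h', rfl⟩
      | cons h'' q'' => simp [Walk.length_cons] at hp

lemma nsp_adj {x y : V} (h : G.Adj x y) : numShortestPaths G x y = 1 := by
  have hd : G.dist x y = 1 := dist_eq_one_iff_adj.mpr h
  rw [numShortestPaths, hd, Nat.card_eq_one_iff_unique]
  refine ⟨⟨?_⟩, ⟨⟨Walk.cons h Walk.nil, by simp⟩⟩⟩
  rintro ⟨p, hp⟩ ⟨q, hq⟩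
  obtain ⟨h1, rfl⟩ := len1_eq p hp
  obtain ⟨h2, rfl⟩ := len1_eq q hq
  rfl

lemma nspt_adj [DecidableEq V] {x y : V} (h : G.Adj x y) (e : Sym2 V) :
    numShortestPathsThru G x y e = if e = s(x, y) then 1 else 0 := by
  have hd : G.dist x y = 1 := dist_eq_one_iff_adj.mpr h
  rw [numShortestPathsThru, hd]
  split_ifs with he
  · rw [Nat.card_eq_one_iff_unique]
    refine ⟨⟨?_⟩, ⟨⟨Walk.cons h Walk.nil, by simp, by simp [he]⟩⟩⟩
    rintro ⟨p, hp, _⟩ ⟨q, hq, _⟩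
    obtain ⟨h1, rfl⟩ := len1_eq p hp
    obtain ⟨h2, rfl⟩ := len1_eq q hq
    rfl
  · have : IsEmpty {p : G.Walk x y // p.length = 1 ∧ e ∈ p.edges} := by
      constructor
      rintro ⟨p, hp, hm⟩
      obtain ⟨h1, rfl⟩ := len1_eq p hp
      simp only [Walk.edges_cons, Walk.edges_nil, List.mem_singleton] at hm
      exact he hm
    exact Nat.card_of_isEmpty

lemma nsp_symm (x y : V) : numShortestPaths G x y = numShortestPaths G y x := by
  rw [numShortestPaths, numShortestPaths]
  exact Nat.card_congr
    ⟨fun p => ⟨p.1.reverse, by simp [p.2, SimpleGraph.dist_comm]⟩,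
     fun p => ⟨p.1.reverse, by simp [p.2, SimpleGraph.dist_comm]⟩,
     fun p => by simp, fun p => by simp⟩

lemma nspt_symm (x y : V) (e : Sym2 V) :
    numShortestPathsThru G x y e = numShortestPathsThru G y x e := by
  rw [numShortestPathsThru, numShortestPathsThru]
  exact Nat.card_congr
    ⟨fun p => ⟨p.1.reverse, by simp [p.2.1, p.2.2, SimpleGraph.dist_comm]⟩,
     fun p => ⟨p.1.reverse, by simp [p.2.1, p.2.2, SimpleGraph.dist_comm]⟩,
     fun p => by simp, fun p => by simp⟩

lemma nsp_two [Fintype V] [DecidableEq V] [DecidableRel G.Adj] {x y : V}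
    (hd : G.dist x y = 2) :
    numShortestPaths G x y = (G.neighborFinset x ∩ G.neighborFinset y).card := by
  rw [numShortestPaths, hd, Nat.card_congr (G.walkLengthTwoEquivCommonNeighbors x y),
    Nat.card_coe_set_eq]
  have : G.commonNeighbors x y = ↑(G.neighborFinset x ∩ G.neighborFinset y) := by
    ext m
    simp [SimpleGraph.mem_commonNeighbors]
  rw [this, Set.ncard_coe_finset]

lemma mid_eq {u w x m : V} (huw : G.Adj u w) (hne : x ≠ u) (hnadj : ¬ G.Adj u x)
    (h1 : G.Adj u m) (h2 : G.Adj m x)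
    (hmem : s(u, w) ∈ (Walk.cons h1 (Walk.cons h2 Walk.nil) : G.Walk u x).edges) :
    m = w := by
  simp only [Walk.edges_cons, Walk.edges_nil, List.mem_cons, List.not_mem_nil,
    or_false, List.mem_singleton] at hmem
  rcases hmem with h | h
  · rw [Sym2.eq_iff] at h
    rcases h with ⟨-, hw⟩ | ⟨-, hw⟩
    · exact hw.symm
    · exact absurd hw.symm huw.ne
  · rw [Sym2.eq_iff] at h
    rcases h with ⟨hm, hw⟩ | ⟨hx, -⟩
    · exact absurd (hw ▸ huw) hnadj
    · exact absurd hx.symm hne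

lemma nspt_two_left [DecidableRel G.Adj] {u w x : V} (huw : G.Adj u w) (hne : x ≠ u)
    (hnadj : ¬ G.Adj u x) (hd : G.dist u x = 2) :
    numShortestPathsThru G u x s(u, w) = if G.Adj w x then 1 else 0 := by
  rw [numShortestPathsThru, hd]
  split_ifs with hwx
  · rw [Nat.card_eq_one_iff_unique]
    refine ⟨⟨?_⟩, ⟨⟨Walk.cons huw (Walk.cons hwx Walk.nil), by simp, by simp⟩⟩⟩
    rintro ⟨p, hp, hmp⟩ ⟨q, hq, hmq⟩
    obtain ⟨m, h1, h2, rfl⟩ := len2_eq p hp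
    obtain ⟨m', h1', h2', rfl⟩ := len2_eq q hq
    obtain rfl := mid_eq huw hne hnadj h1 h2 hmp
    obtain rfl := mid_eq huw hne hnadj h1' h2' hmq
    rfl
  · have : IsEmpty {p : G.Walk u x // p.length = 2 ∧ s(u, w) ∈ p.edges} := by
      constructor
      rintro ⟨p, hp, hm⟩
      obtain ⟨m, h1, h2, rfl⟩ := len2_eq p hp
      obtain rfl := mid_eq huw hne hnadj h1 h2 hm
      exact hwx h2
    exact Nat.card_of_isEmpty

lemma nspt_two_none {u w x y : V} (hd : G.dist x y = 2)
    (h1 : x ≠ u) (h2 : x ≠ w) (h3 : y ≠ u) (h4 : y ≠ w) :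
    numShortestPathsThru G x y s(u, w) = 0 := by
  rw [numShortestPathsThru, hd]
  have : IsEmpty {p : G.Walk x y // p.length = 2 ∧ s(u, w) ∈ p.edges} := by
    constructor
    rintro ⟨p, hp, hm⟩
    obtain ⟨m, ha, hb, rfl⟩ := len2_eq p hp
    simp only [Walk.edges_cons, Walk.edges_nil, List.mem_cons, List.not_mem_nil,
      or_false, List.mem_singleton] at hm
    rcases hm with h | h <;> rw [Sym2.eq_iff] at h
    · rcases h with ⟨hu, -⟩ | ⟨-, hw⟩
      · exact h1 hu.symm
      · exact h2 hw.symm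
    · rcases h with ⟨-, hw⟩ | ⟨hu, -⟩
      · exact h4 hw.symm
      · exact h3 hu.symm
  exact Nat.card_of_isEmpty

end Aux

theorem stmt2 {V : Type*} [Fintype V] [DecidableEq V] (G : SimpleGraph V)
    [DecidableRel G.Adj] (hconn : G.Connected)
    (hdiam : ∀ x y : V, G.dist x y ≤ 2) (hdiam2 : ∃ x y : V, G.dist x y = 2)
    (u w : V) (huw : G.Adj u w) :
    edgeBetweenness G s(u, w) =
      2 + 2 * ∑ v ∈ (G.neighborFinset w \ G.neighborFinset u).erase u,
              (1 : ℚ) / ((G.neighborFinset u ∩ G.neighborFinset v).card)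
        + 2 * ∑ v ∈ (G.neighborFinset u \ G.neighborFinset w).erase w,
              (1 : ℚ) / ((G.neighborFinset w ∩ G.neighborFinset v).card) := by
  classical
  set A := (G.neighborFinset w \ G.neighborFinset u).erase u with hA
  set B := (G.neighborFinset u \ G.neighborFinset w).erase w with hB
  have hAmem : ∀ z, z ∈ A ↔ z ≠ u ∧ G.Adj w z ∧ ¬ G.Adj u z := by
    intro z
    simp [hA, Finset.mem_erase, Finset.mem_sdiff, SimpleGraph.mem_neighborFinset,
      and_assoc]
  have hBmem : ∀ z, z ∈ B ↔ z ≠ w ∧ G.Adj u z ∧ ¬ G.Adj w z := by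
    intro z
    simp [hB, Finset.mem_erase, Finset.mem_sdiff, SimpleGraph.mem_neighborFinset,
      and_assoc]
  have key : edgeBetweenness G s(u, w) = ∑ x : V, ∑ y : V,
      ((if x = u ∧ y = w then (1:ℚ) else 0) + (if x = w ∧ y = u then (1:ℚ) else 0)
       + (if x = u ∧ y ∈ A then (1:ℚ) / ((G.neighborFinset u ∩ G.neighborFinset y).card) else 0)
       + (if y = u ∧ x ∈ A then (1:ℚ) / ((G.neighborFinset u ∩ G.neighborFinset x).card) else 0)
       + (if x = w ∧ y ∈ B then (1:ℚ) / ((G.neighborFinset w ∩ G.neighborFinset y).card) else 0)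
       + (if y = w ∧ x ∈ B then (1:ℚ) / ((G.neighborFinset w ∩ G.neighborFinset x).card) else 0)) := by
    unfold edgeBetweenness
    refine Finset.sum_congr rfl fun x _ => Finset.sum_congr rfl fun y _ => ?_
    by_cases hxy : x = y
    · rw [if_pos hxy]
      subst hxy
      have n1 : ¬(x = u ∧ x = w) := by rintro ⟨rfl, rfl⟩; exact huw.ne rfl
      have n2 : ¬(x = w ∧ x = u) := by rintro ⟨rfl, rfl⟩; exact huw.ne rfl
      have n3 : ¬(x = u ∧ x ∈ A) := by
        rintro ⟨rfl, hm⟩; exact ((hAmem x).mp hm).1 rfl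
      have n5 : ¬(x = w ∧ x ∈ B) := by
        rintro ⟨rfl, hm⟩; exact ((hBmem x).mp hm).1 rfl
      rw [if_neg n1, if_neg n2, if_neg n3, if_neg n5]
      norm_num
    · rw [if_neg hxy]
      by_cases hadj : G.Adj x y
      · rw [nsp_adj hadj, nspt_adj hadj]
        by_cases he : s(u, w) = s(x, y)
        · rw [if_pos he]
          rw [Sym2.eq_iff] at he
          rcases he with ⟨rfl, rfl⟩ | ⟨rfl, rfl⟩ <;>
            simp [hAmem, hBmem, huw.ne, huw.ne', SimpleGraph.irrefl]
        · rw [if_neg he]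
          have n1 : ¬(x = u ∧ y = w) := by rintro ⟨rfl, rfl⟩; exact he rfl
          have n2 : ¬(x = w ∧ y = u) := by rintro ⟨rfl, rfl⟩; exact he Sym2.eq_swap
          have n3 : ¬(x = u ∧ y ∈ A) := by
            rintro ⟨rfl, hm⟩; exact ((hAmem y).mp hm).2.2 hadj
          have n4 : ¬(y = u ∧ x ∈ A) := by
            rintro ⟨rfl, hm⟩; exact ((hAmem x).mp hm).2.2 hadj.symm
          have n5 : ¬(x = w ∧ y ∈ B) := by
            rintro ⟨rfl, hm⟩; exact ((hBmem y).mp hm).2.2 hadj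
          have n6 : ¬(y = w ∧ x ∈ B) := by
            rintro ⟨rfl, hm⟩; exact ((hBmem x).mp hm).2.2 hadj.symm
          simp [n1, n2, n3, n4, n5, n6]
      · have hd : G.dist x y = 2 := by
          have h1 := hconn.pos_dist_of_ne hxy
          have h2 := hdiam x y
          have h3 : G.dist x y ≠ 1 := fun h => hadj (dist_eq_one_iff_adj.mp h)
          omega
        rw [nsp_two hd]
        by_cases hxu : x = u
        · rw [hxu]
          have hadj' : ¬ G.Adj u y := fun h => hadj (by rw [hxu]; exact h)
          have hne' : y ≠ u := fun h => hxy (hxu.trans h.symm)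
          have hyw' : y ≠ w := fun h => hadj' (by rw [h]; exact huw)
          have hd' : G.dist u y = 2 := by rwa [hxu] at hd
          rw [nspt_two_left huw hne' hadj' hd']
          by_cases hwy : G.Adj w y
          · have hyA : y ∈ A := (hAmem y).mpr ⟨hne', hwy, hadj'⟩
            rw [if_pos hwy]
            simp [hyA, hyw', huw.ne, huw.ne', hne']
          · have hyA : y ∉ A := fun hm => hwy ((hAmem y).mp hm).2.1
            rw [if_neg hwy]
            simp [hyA, hyw', huw.ne, huw.ne', hne']
        · by_cases hyu : y = u
          · rw [hyu]
            have hnadj' : ¬ G.Adj u x := fun h => hadj (by rw [hyu]; exact h.symm)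
            have hd' : G.dist u x = 2 := by rwa [SimpleGraph.dist_comm, hyu] at hd
            have hxw : x ≠ w := fun h => hnadj' (by rw [h]; exact huw)
            rw [nspt_symm, nspt_two_left huw hxu hnadj' hd',
              Finset.inter_comm (G.neighborFinset x)]
            by_cases hwx : G.Adj w x
            · have hxA : x ∈ A := (hAmem x).mpr ⟨hxu, hwx, hnadj'⟩
              rw [if_pos hwx]
              simp [hxA, hxu, hxw, huw.ne, huw.ne']
            · have hxA : x ∉ A := fun hm => hwx ((hAmem x).mp hm).2.1
              rw [if_neg hwx]
              simp [hxA, hxu, hxw, huw.ne, huw.ne']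
          · by_cases hxw : x = w
            · rw [hxw]
              have hadj' : ¬ G.Adj w y := fun h => hadj (by rw [hxw]; exact h)
              have hne' : y ≠ w := fun h => hxy (hxw.trans h.symm)
              have hd' : G.dist w y = 2 := by rwa [hxw] at hd
              rw [show s(u, w) = s(w, u) from Sym2.eq_swap,
                nspt_two_left huw.symm hne' hadj' hd']
              by_cases huy : G.Adj u y
              · have hyB : y ∈ B := (hBmem y).mpr ⟨hne', huy, hadj'⟩
                rw [if_pos huy]
                simp [hyB, hyu, huw.ne, huw.ne', hne']
              · have hyB : y ∉ B := fun hm => huy ((hBmem y).mp hm).2.1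
                rw [if_neg huy]
                simp [hyB, hyu, huw.ne, huw.ne', hne']
            · by_cases hyw : y = w
              · rw [hyw]
                have hadj' : ¬ G.Adj w x := fun h => hadj (by rw [hyw]; exact h.symm)
                have hd' : G.dist w x = 2 := by rwa [SimpleGraph.dist_comm, hyw] at hd
                rw [nspt_symm, show s(u, w) = s(w, u) from Sym2.eq_swap,
                  nspt_two_left huw.symm hxw hadj' hd',
                  Finset.inter_comm (G.neighborFinset x)]
                by_cases hux : G.Adj u x
                · have hxB : x ∈ B := (hBmem x).mpr ⟨hxw, hux, hadj'⟩
                  rw [if_pos hux]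
                  simp [hxB, hxu, hxw, huw.ne, huw.ne']
                · have hxB : x ∉ B := fun hm => hux ((hBmem x).mp hm).2.1
                  rw [if_neg hux]
                  simp [hxB, hxu, hxw, huw.ne, huw.ne']
              · rw [nspt_two_none hd hxu hxw hyu hyw]
                simp [hxu, hxw, hyu, hyw]
  rw [key]
  have hstep : ∀ x : V, (∑ y : V,
      ((if x = u ∧ y = w then (1:ℚ) else 0) + (if x = w ∧ y = u then (1:ℚ) else 0)
       + (if x = u ∧ y ∈ A then (1:ℚ) / ((G.neighborFinset u ∩ G.neighborFinset y).card) else 0)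
       + (if y = u ∧ x ∈ A then (1:ℚ) / ((G.neighborFinset u ∩ G.neighborFinset x).card) else 0)
       + (if x = w ∧ y ∈ B then (1:ℚ) / ((G.neighborFinset w ∩ G.neighborFinset y).card) else 0)
       + (if y = w ∧ x ∈ B then (1:ℚ) / ((G.neighborFinset w ∩ G.neighborFinset x).card) else 0))) =
      ((if x = u then (1:ℚ) else 0) + (if x = w then (1:ℚ) else 0)
       + (if x = u then ∑ v ∈ A, (1:ℚ) / ((G.neighborFinset u ∩ G.neighborFinset v).card) else 0)
       + (if x ∈ A then (1:ℚ) / ((G.neighborFinset u ∩ G.neighborFinset x).card) else 0)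
       + (if x = w then ∑ v ∈ B, (1:ℚ) / ((G.neighborFinset w ∩ G.neighborFinset v).card) else 0)
       + (if x ∈ B then (1:ℚ) / ((G.neighborFinset w ∩ G.neighborFinset x).card) else 0)) := by
    intro x
    rw [Finset.sum_add_distrib, Finset.sum_add_distrib, Finset.sum_add_distrib,
      Finset.sum_add_distrib, Finset.sum_add_distrib]
    congr 1
    · congr 1
      · congr 1
        · congr 1
          · congr 1
            · by_cases h : x = u <;> simp [h]
            · by_cases h : x = w <;> simp [h]
          · by_cases h : x = u <;>
              simp [h, Finset.sum_ite_mem, Finset.univ_inter]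
        · by_cases h : x ∈ A <;> simp [h, Finset.sum_ite_eq']
      · by_cases h : x = w <;>
          simp [h, Finset.sum_ite_mem, Finset.univ_inter]
    · by_cases h : x ∈ B <;> simp [h, Finset.sum_ite_eq']
  rw [Finset.sum_congr rfl fun x _ => hstep x]
  simp only [Finset.sum_add_distrib, Finset.sum_ite_eq', Finset.mem_univ, if_true,
    Finset.sum_ite_mem, Finset.univ_inter]
  ring
end

section
/- In the complete bipartite graph K_{m,n} with m,n ≥ 1 (and not both equal to 1 trivializing the formula), every edge e has edge betweenness centrality B'(e) = 2 + 2(n−1)/m + 2(m−1)/n. In particular K_{m,n} is edge-betweenness-uniform. -/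
open SimpleGraph Finset

section WalkAux
variable {V : Type*} {G : SimpleGraph V} {x y : V}

lemma walk_len_one (p : G.Walk x y) (hp : p.length = 1) :
    ∃ h : G.Adj x y, p = Walk.cons h Walk.nil := by
  match p with
  | .nil => simp at hp
  | .cons h .nil => exact ⟨h, rfl⟩
  | .cons h (.cons h' q) => simp [Walk.length_cons] at hp

lemma walk_len_two (p : G.Walk x y) (hp : p.length = 2) :
    ∃ (z : V) (h1 : G.Adj x z) (h2 : G.Adj z y),
      p = Walk.cons h1 (Walk.cons h2 Walk.nil) := by
  match p with
  | .nil => simp at hp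
  | .cons h q =>
    obtain ⟨h2, rfl⟩ := walk_len_one q (by simpa using hp)
    exact ⟨_, h, h2, rfl⟩

lemma ncard_walks_one (h : G.Adj x y) :
    Nat.card {p : G.Walk x y // p.length = 1} = 1 := by
  rw [Nat.card_eq_one_iff_unique]
  refine ⟨⟨?_⟩, ⟨⟨.cons h .nil, rfl⟩⟩⟩
  rintro ⟨p, hp⟩ ⟨q, hq⟩
  obtain ⟨h1, rfl⟩ := walk_len_one p hp
  obtain ⟨h2, rfl⟩ := walk_len_one q hq
  rfl

open Classical in
lemma ncard_walks_one_thru (h : G.Adj x y) (e : Sym2 V) :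
    Nat.card {p : G.Walk x y // p.length = 1 ∧ e ∈ p.edges} =
      if e = s(x, y) then 1 else 0 := by
  split_ifs with he
  · rw [Nat.card_eq_one_iff_unique]
    refine ⟨⟨?_⟩, ⟨⟨.cons h .nil, rfl, by simp [he]⟩⟩⟩
    rintro ⟨p, hp, _⟩ ⟨q, hq, _⟩
    obtain ⟨h1, rfl⟩ := walk_len_one p hp
    obtain ⟨h2, rfl⟩ := walk_len_one q hq
    rfl
  · have : IsEmpty {p : G.Walk x y // p.length = 1 ∧ e ∈ p.edges} := by
      refine ⟨fun z => ?_⟩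
      obtain ⟨p, hp, hme⟩ := z
      obtain ⟨h1, rfl⟩ := walk_len_one p hp
      simp at hme
      exact he hme
    simp

lemma ncard_walks_two :
    Nat.card {p : G.Walk x y // p.length = 2} =
      Nat.card {z : V // G.Adj x z ∧ G.Adj z y} := by
  refine (Nat.card_eq_of_bijective
    (fun z => ⟨Walk.cons z.2.1 (Walk.cons z.2.2 Walk.nil), rfl⟩) ⟨?_, ?_⟩).symm
  · rintro ⟨z, hz⟩ ⟨z', hz'⟩ hf
    have := congrArg (fun q => (q : {p : G.Walk x y // p.length = 2}).1.getVert 1) hf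
    simpa [Walk.getVert_cons_succ, Walk.getVert_zero] using this
  · rintro ⟨p, hp⟩
    obtain ⟨z, h1, h2, rfl⟩ := walk_len_two p hp
    exact ⟨⟨z, h1, h2⟩, rfl⟩

lemma ncard_walks_two_thru (e : Sym2 V) :
    Nat.card {p : G.Walk x y // p.length = 2 ∧ e ∈ p.edges} =
      Nat.card {z : V // (G.Adj x z ∧ G.Adj z y) ∧ (e = s(x, z) ∨ e = s(z, y))} := by
  refine (Nat.card_eq_of_bijective
    (fun z => ⟨Walk.cons z.2.1.1 (Walk.cons z.2.1.2 Walk.nil), rfl, by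
      rcases z.2.2 with h | h <;> simp [h]⟩) ⟨?_, ?_⟩).symm
  · rintro ⟨z, hz⟩ ⟨z', hz'⟩ hf
    have := congrArg
      (fun q => (q : {p : G.Walk x y // p.length = 2 ∧ e ∈ p.edges}).1.getVert 1) hf
    simpa [Walk.getVert_cons_succ, Walk.getVert_zero] using this
  · rintro ⟨p, hp, hme⟩
    obtain ⟨z, h1, h2, rfl⟩ := walk_len_two p hp
    simp only [Walk.edges_cons, Walk.edges_nil, List.mem_cons, List.not_mem_nil, or_false] at hme
    exact ⟨⟨z, ⟨h1, h2⟩, hme⟩, rfl⟩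

end WalkAux


section Bip
open Sum
variable {m n : ℕ}

local notation "K" => completeBipartiteGraph (Fin m) (Fin n)

lemma adj_lr (a : Fin m) (b : Fin n) : (K).Adj (inl a) (inr b) := by simp
lemma adj_rl (a : Fin m) (b : Fin n) : (K).Adj (inr b) (inl a) := by simp
lemma not_adj_ll (a a' : Fin m) : ¬ (K).Adj (inl a) (inl a') := by simp
lemma not_adj_rr (b b' : Fin n) : ¬ (K).Adj (inr b) (inr b') := by simp

lemma dist_lr (a : Fin m) (b : Fin n) : (K).dist (inl a) (inr b) = 1 :=
  (SimpleGraph.dist_eq_one_iff_adj).mpr (adj_lr a b)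

lemma dist_rl (a : Fin m) (b : Fin n) : (K).dist (inr b) (inl a) = 1 :=
  (SimpleGraph.dist_eq_one_iff_adj).mpr (adj_rl a b)

lemma dist_ll (hn : 1 ≤ n) {a a' : Fin m} (hne : a ≠ a') :
    (K).dist (inl a) (inl a') = 2 := by
  have b0 : Fin n := ⟨0, hn⟩
  let w : (K).Walk (inl a) (inl a') :=
    Walk.cons (adj_lr a b0) (Walk.cons (adj_rl a' b0) Walk.nil)
  have hle : (K).dist (inl a) (inl a') ≤ 2 := by
    simpa [w] using SimpleGraph.dist_le w
  have h0 : (K).dist (inl a) (inl a') ≠ 0 := by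
    rw [SimpleGraph.dist_ne_zero_iff_ne_and_reachable]
    exact ⟨by simp [hne], ⟨w⟩⟩
  have h1 : (K).dist (inl a) (inl a') ≠ 1 := fun hd =>
    not_adj_ll a a' (SimpleGraph.dist_eq_one_iff_adj.mp hd)
  omega

lemma dist_rr (hm : 1 ≤ m) {b b' : Fin n} (hne : b ≠ b') :
    (K).dist (inr b) (inr b') = 2 := by
  have a0 : Fin m := ⟨0, hm⟩
  let w : (K).Walk (inr b) (inr b') :=
    Walk.cons (adj_rl a0 b) (Walk.cons (adj_lr a0 b') Walk.nil)
  have hle : (K).dist (inr b) (inr b') ≤ 2 := by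
    simpa [w] using SimpleGraph.dist_le w
  have h0 : (K).dist (inr b) (inr b') ≠ 0 := by
    rw [SimpleGraph.dist_ne_zero_iff_ne_and_reachable]
    exact ⟨by simp [hne], ⟨w⟩⟩
  have h1 : (K).dist (inr b) (inr b') ≠ 1 := fun hd =>
    not_adj_rr b b' (SimpleGraph.dist_eq_one_iff_adj.mp hd)
  omega

lemma card_mid_ll (a a' : Fin m) :
    Nat.card {z : Fin m ⊕ Fin n // (K).Adj (inl a) z ∧ (K).Adj z (inl a')} = n := by
  have := Nat.card_eq_of_bijective
    (α := Fin n) (β := {z : Fin m ⊕ Fin n // (K).Adj (inl a) z ∧ (K).Adj z (inl a')})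
    (fun b => ⟨inr b, adj_lr a b, adj_rl a' b⟩) ⟨?_, ?_⟩
  · rw [← this]; simp
  · intro b b' hb; simpa using hb
  · rintro ⟨z, hz1, hz2⟩
    match z with
    | inl c => exact absurd hz1 (not_adj_ll a c)
    | inr b => exact ⟨b, rfl⟩

lemma card_mid_rr (b b' : Fin n) :
    Nat.card {z : Fin m ⊕ Fin n // (K).Adj (inr b) z ∧ (K).Adj z (inr b')} = m := by
  have := Nat.card_eq_of_bijective
    (α := Fin m) (β := {z : Fin m ⊕ Fin n // (K).Adj (inr b) z ∧ (K).Adj z (inr b')})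
    (fun a => ⟨inl a, adj_rl a b, adj_lr a b'⟩) ⟨?_, ?_⟩
  · rw [← this]; simp
  · intro a a' ha; simpa using ha
  · rintro ⟨z, hz1, hz2⟩
    match z with
    | inr c => exact absurd hz1 (not_adj_rr b c)
    | inl a => exact ⟨a, rfl⟩

open Classical in
lemma card_mid_ll_thru (a a' c : Fin m) (d : Fin n) :
    Nat.card {z : Fin m ⊕ Fin n // ((K).Adj (inl a) z ∧ (K).Adj z (inl a')) ∧
      (s(inl c, inr d) = s(inl a, z) ∨ s(inl c, inr d) = s(z, inl a'))} =
      if c = a ∨ c = a' then 1 else 0 := by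
  split_ifs with hc
  · rw [Nat.card_eq_one_iff_unique]
    constructor
    · constructor
      rintro ⟨z, ⟨hz1, hz2⟩, hz3⟩ ⟨z', ⟨hz1', hz2'⟩, hz3'⟩
      have hz : z = inr d := by
        match z with
        | inl e => exact absurd hz1 (not_adj_ll a e)
        | inr b =>
          rcases hz3 with h | h <;> · simp [Sym2.eq_iff] at h; simp [h.2]
      have hz' : z' = inr d := by
        match z' with
        | inl e => exact absurd hz1' (not_adj_ll a e)
        | inr b =>
          rcases hz3' with h | h <;> · simp [Sym2.eq_iff] at h; simp [h.2]
      simp [hz, hz']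
    · rcases hc with rfl | rfl
      · exact ⟨⟨inr d, ⟨adj_lr c d, adj_rl a' d⟩, Or.inl rfl⟩⟩
      · exact ⟨⟨inr d, ⟨adj_lr a d, adj_rl c d⟩, Or.inr (Sym2.eq_swap)⟩⟩
  · have : IsEmpty {z : Fin m ⊕ Fin n // ((K).Adj (inl a) z ∧ (K).Adj z (inl a')) ∧
        (s(inl c, inr d) = s(inl a, z) ∨ s(inl c, inr d) = s(z, inl a'))} := by
      refine ⟨fun zz => ?_⟩
      obtain ⟨z, ⟨hz1, hz2⟩, hz3⟩ := zz
      match z with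
      | inl e => exact absurd hz1 (not_adj_ll a e)
      | inr b =>
        rcases hz3 with h | h <;>
        · simp [Sym2.eq_iff] at h
          exact hc (by simp [h.1])
    exact Nat.card_of_isEmpty

open Classical in
lemma card_mid_rr_thru (b b' d : Fin n) (c : Fin m) :
    Nat.card {z : Fin m ⊕ Fin n // ((K).Adj (inr b) z ∧ (K).Adj z (inr b')) ∧
      (s(inl c, inr d) = s(inr b, z) ∨ s(inl c, inr d) = s(z, inr b'))} =
      if d = b ∨ d = b' then 1 else 0 := by
  split_ifs with hd
  · rw [Nat.card_eq_one_iff_unique]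
    constructor
    · constructor
      rintro ⟨z, ⟨hz1, hz2⟩, hz3⟩ ⟨z', ⟨hz1', hz2'⟩, hz3'⟩
      have hz : z = inl c := by
        match z with
        | inr e => exact absurd hz1 (not_adj_rr b e)
        | inl a =>
          rcases hz3 with h | h <;> · simp [Sym2.eq_iff] at h; simp [h.1]
      have hz' : z' = inl c := by
        match z' with
        | inr e => exact absurd hz1' (not_adj_rr b e)
        | inl a =>
          rcases hz3' with h | h <;> · simp [Sym2.eq_iff] at h; simp [h.1]
      simp [hz, hz']
    · rcases hd with rfl | rfl
      · exact ⟨⟨inl c, ⟨adj_rl c d, adj_lr c b'⟩, Or.inl (Sym2.eq_swap)⟩⟩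
      · exact ⟨⟨inl c, ⟨adj_rl c b, adj_lr c d⟩, Or.inr rfl⟩⟩
  · have : IsEmpty {z : Fin m ⊕ Fin n // ((K).Adj (inr b) z ∧ (K).Adj z (inr b')) ∧
        (s(inl c, inr d) = s(inr b, z) ∨ s(inl c, inr d) = s(z, inr b'))} := by
      refine ⟨fun zz => ?_⟩
      obtain ⟨z, ⟨hz1, hz2⟩, hz3⟩ := zz
      match z with
      | inr e => exact absurd hz1 (not_adj_rr b e)
      | inl a =>
        rcases hz3 with h | h <;>
        · simp [Sym2.eq_iff] at h
          exact hd (by simp [h.2])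
    exact Nat.card_of_isEmpty


end Bip

section EBAux
open Sum

variable {m n : ℕ}

local notation "K" => completeBipartiteGraph (Fin m) (Fin n)

lemma nsp_lr (a : Fin m) (b : Fin n) : numShortestPaths (K) (inl a) (inr b) = 1 := by
  rw [numShortestPaths, dist_lr]
  exact ncard_walks_one (adj_lr a b)

lemma nsp_rl (a : Fin m) (b : Fin n) : numShortestPaths (K) (inr b) (inl a) = 1 := by
  rw [numShortestPaths, dist_rl]
  exact ncard_walks_one (adj_rl a b)

lemma nsp_ll (hn : 1 ≤ n) {a a' : Fin m} (hne : a ≠ a') :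
    numShortestPaths (K) (inl a) (inl a') = n := by
  rw [numShortestPaths, dist_ll hn hne, ncard_walks_two, card_mid_ll]

lemma nsp_rr (hm : 1 ≤ m) {b b' : Fin n} (hne : b ≠ b') :
    numShortestPaths (K) (inr b) (inr b') = m := by
  rw [numShortestPaths, dist_rr hm hne, ncard_walks_two, card_mid_rr]

lemma nspt_lr (a c : Fin m) (b d : Fin n) :
    numShortestPathsThru (K) (inl a) (inr b) s(inl c, inr d) =
      if c = a ∧ d = b then 1 else 0 := by
  rw [numShortestPathsThru, dist_lr, ncard_walks_one_thru (adj_lr a b)]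
  by_cases h : c = a ∧ d = b
  · rw [if_pos h, if_pos (by simp [h.1, h.2])]
  · rw [if_neg h, if_neg (by simp [Sym2.eq_iff]; tauto)]

lemma nspt_rl (a c : Fin m) (b d : Fin n) :
    numShortestPathsThru (K) (inr b) (inl a) s(inl c, inr d) =
      if c = a ∧ d = b then 1 else 0 := by
  rw [numShortestPathsThru, dist_rl, ncard_walks_one_thru (adj_rl a b)]
  by_cases h : c = a ∧ d = b
  · rw [if_pos h, if_pos (by rw [h.1, h.2]; exact Sym2.eq_swap)]
  · rw [if_neg h, if_neg (by simp [Sym2.eq_iff]; tauto)]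

lemma nspt_ll (hn : 1 ≤ n) {a' a'' : Fin m} (hne : a' ≠ a'') (c : Fin m) (d : Fin n) :
    numShortestPathsThru (K) (inl a') (inl a'') s(inl c, inr d) =
      if c = a' ∨ c = a'' then 1 else 0 := by
  rw [numShortestPathsThru, dist_ll hn hne, ncard_walks_two_thru, card_mid_ll_thru]

lemma nspt_rr (hm : 1 ≤ m) {b' b'' : Fin n} (hne : b' ≠ b'') (c : Fin m) (d : Fin n) :
    numShortestPathsThru (K) (inr b') (inr b'') s(inl c, inr d) =
      if d = b' ∨ d = b'' then 1 else 0 := by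
  rw [numShortestPathsThru, dist_rr hm hne, ncard_walks_two_thru, card_mid_rr_thru]

lemma sum_if_eq {k : ℕ} (a : Fin k) (c d : ℚ) :
    ∑ x : Fin k, (if x = a then c else d) = c + ((k : ℚ) - 1) * d := by
  have h : ∀ x : Fin k, (if x = a then c else d) = d + (if x = a then c - d else 0) :=
    fun x => by split <;> ring
  rw [Finset.sum_congr rfl (fun x _ => h x), Finset.sum_add_distrib, Finset.sum_const,
    Finset.sum_ite_eq' Finset.univ a (fun _ => c - d), if_pos (Finset.mem_univ a)]
  simp [Finset.card_univ, nsmul_eq_mul]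
  ring

lemma eb_eq (e : Sym2 (Fin m ⊕ Fin n)) :
    edgeBetweenness (K) e = ∑ x : Fin m ⊕ Fin n, ∑ y : Fin m ⊕ Fin n,
      (if x = y then (0:ℚ) else
        (numShortestPathsThru (K) x y e : ℚ) / (numShortestPaths (K) x y)) := by
  rw [edgeBetweenness]
  refine Finset.sum_congr rfl fun x _ => Finset.sum_congr rfl fun y _ => ?_
  by_cases h : x = y <;> simp [h]

lemma key (hm : 1 ≤ m) (hn : 1 ≤ n) (a : Fin m) (b : Fin n) :
    edgeBetweenness (K) s(inl a, inr b) =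
      2 + 2 * ((n : ℚ) - 1) / m + 2 * ((m : ℚ) - 1) / n := by
  have hm0 : (m : ℚ) ≠ 0 := Nat.cast_ne_zero.mpr (by omega)
  have hn0 : (n : ℚ) ≠ 0 := Nat.cast_ne_zero.mpr (by omega)
  rw [eb_eq, Fintype.sum_sum_type]
  have hLL : ∀ a' : Fin m, ∑ a'' : Fin m,
      (if (inl a' : Fin m ⊕ Fin n) = inl a'' then (0:ℚ) else
        (numShortestPathsThru (K) (inl a') (inl a'') s(inl a, inr b) : ℚ) /
          (numShortestPaths (K) (inl a') (inl a''))) =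
      if a' = a then ((m : ℚ) - 1) * (1 / n) else 1 / n := by
    intro a'
    have hv : ∀ a'' : Fin m, (if (inl a' : Fin m ⊕ Fin n) = inl a'' then (0:ℚ) else
        (numShortestPathsThru (K) (inl a') (inl a'') s(inl a, inr b) : ℚ) /
          (numShortestPaths (K) (inl a') (inl a''))) =
        if a'' = a' then 0 else (if a = a' ∨ a = a'' then (1:ℚ) else 0) / n := by
      intro a''
      by_cases h : a' = a''
      · simp [h]
      · rw [if_neg (by simp [h]), if_neg (fun hh => h hh.symm),
          nspt_ll hn h a b, nsp_ll hn h]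
        push_cast
        ring
    rw [Finset.sum_congr rfl fun a'' _ => hv a'']
    by_cases ha' : a' = a
    · rw [if_pos ha',
        Finset.sum_congr rfl (fun a'' _ => show _ = if a'' = a' then (0:ℚ) else 1 / n from ?_),
        sum_if_eq a' 0 (1/n)]
      · ring
      · by_cases h : a'' = a'
        · rw [if_pos h, if_pos h]
        · rw [if_neg h, if_neg h, if_pos (Or.inl ha'.symm)]
    · rw [if_neg ha',
        Finset.sum_congr rfl (fun a'' _ => show _ = if a'' = a then (1:ℚ) / n else 0 from ?_),
        sum_if_eq a (1/n) 0]
      · ring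
      · by_cases h : a'' = a
        · rw [if_neg (fun hh => ha' (hh.symm.trans h)), if_pos (Or.inr h.symm), if_pos h]
        · by_cases h2 : a'' = a'
          · rw [if_pos h2, if_neg h]
          · rw [if_neg h2, if_neg h,
              if_neg (show ¬(a = a' ∨ a = a'') from by
                rintro (h1 | h1); exact ha' h1.symm; exact h h1.symm)]
            simp
  have hLR : ∀ a' : Fin m, ∑ b' : Fin n,
      (if (inl a' : Fin m ⊕ Fin n) = inr b' then (0:ℚ) else
        (numShortestPathsThru (K) (inl a') (inr b') s(inl a, inr b) : ℚ) /
          (numShortestPaths (K) (inl a') (inr b'))) =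
      if a' = a then (1:ℚ) else 0 := by
    intro a'
    rw [Finset.sum_congr rfl (fun b' _ =>
        show _ = if b' = b then (if a' = a then (1:ℚ) else 0) else 0 from ?_),
      sum_if_eq b (if a' = a then (1:ℚ) else 0) 0]
    · ring
    · rw [if_neg (by simp), nspt_lr a' a b' b, nsp_lr]
      push_cast
      rw [div_one]
      by_cases h1 : a' = a
      · subst h1
        by_cases h2 : b' = b
        · subst h2; simp
        · rw [if_neg (fun hh => h2 hh.2.symm), if_neg h2]
      · rw [if_neg (fun hh => h1 hh.1.symm), if_neg h1, ite_self]
  have hRL : ∀ b' : Fin n, ∑ a' : Fin m,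
      (if (inr b' : Fin m ⊕ Fin n) = inl a' then (0:ℚ) else
        (numShortestPathsThru (K) (inr b') (inl a') s(inl a, inr b) : ℚ) /
          (numShortestPaths (K) (inr b') (inl a'))) =
      if b' = b then (1:ℚ) else 0 := by
    intro b'
    rw [Finset.sum_congr rfl (fun a' _ =>
        show _ = if a' = a then (if b' = b then (1:ℚ) else 0) else 0 from ?_),
      sum_if_eq a (if b' = b then (1:ℚ) else 0) 0]
    · ring
    · rw [if_neg (by simp), nspt_rl a' a b' b, nsp_rl]
      push_cast
      rw [div_one]
      by_cases h1 : b' = b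
      · subst h1
        by_cases h2 : a' = a
        · subst h2; simp
        · rw [if_neg (fun hh => h2 hh.1.symm), if_neg h2]
      · rw [if_neg (fun hh => h1 hh.2.symm), if_neg h1, ite_self]
  have hRR : ∀ b' : Fin n, ∑ b'' : Fin n,
      (if (inr b' : Fin m ⊕ Fin n) = inr b'' then (0:ℚ) else
        (numShortestPathsThru (K) (inr b') (inr b'') s(inl a, inr b) : ℚ) /
          (numShortestPaths (K) (inr b') (inr b''))) =
      if b' = b then ((n : ℚ) - 1) * (1 / m) else 1 / m := by
    intro b'
    have hv : ∀ b'' : Fin n, (if (inr b' : Fin m ⊕ Fin n) = inr b'' then (0:ℚ) else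
        (numShortestPathsThru (K) (inr b') (inr b'') s(inl a, inr b) : ℚ) /
          (numShortestPaths (K) (inr b') (inr b''))) =
        if b'' = b' then 0 else (if b = b' ∨ b = b'' then (1:ℚ) else 0) / m := by
      intro b''
      by_cases h : b' = b''
      · simp [h]
      · rw [if_neg (by simp [h]), if_neg (fun hh => h hh.symm),
          nspt_rr hm h a b, nsp_rr hm h]
        push_cast
        ring
    rw [Finset.sum_congr rfl fun b'' _ => hv b'']
    by_cases hb' : b' = b
    · rw [if_pos hb',
        Finset.sum_congr rfl (fun b'' _ => show _ = if b'' = b' then (0:ℚ) else 1 / m from ?_),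
        sum_if_eq b' 0 (1/m)]
      · ring
      · by_cases h : b'' = b'
        · rw [if_pos h, if_pos h]
        · rw [if_neg h, if_neg h, if_pos (Or.inl hb'.symm)]
    · rw [if_neg hb',
        Finset.sum_congr rfl (fun b'' _ => show _ = if b'' = b then (1:ℚ) / m else 0 from ?_),
        sum_if_eq b (1/m) 0]
      · ring
      · by_cases h : b'' = b
        · rw [if_neg (fun hh => hb' (hh.symm.trans h)), if_pos (Or.inr h.symm), if_pos h]
        · by_cases h2 : b'' = b'
          · rw [if_pos h2, if_neg h]
          · rw [if_neg h2, if_neg h,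
              if_neg (show ¬(b = b' ∨ b = b'') from by
                rintro (h1 | h1); exact hb' h1.symm; exact h h1.symm)]
            simp
  have hleft : ∀ a' : Fin m, (∑ y : Fin m ⊕ Fin n,
      (if (inl a' : Fin m ⊕ Fin n) = y then (0:ℚ) else
        (numShortestPathsThru (K) (inl a') y s(inl a, inr b) : ℚ) /
          (numShortestPaths (K) (inl a') y))) =
      if a' = a then ((m : ℚ) - 1) * (1 / n) + 1 else 1 / n + 0 := by
    intro a'
    rw [Fintype.sum_sum_type, hLL a', hLR a']
    by_cases h : a' = a <;> simp [h]
  have hright : ∀ b' : Fin n, (∑ y : Fin m ⊕ Fin n,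
      (if (inr b' : Fin m ⊕ Fin n) = y then (0:ℚ) else
        (numShortestPathsThru (K) (inr b') y s(inl a, inr b) : ℚ) /
          (numShortestPaths (K) (inr b') y))) =
      if b' = b then 1 + ((n : ℚ) - 1) * (1 / m) else 0 + 1 / m := by
    intro b'
    rw [Fintype.sum_sum_type, hRL b', hRR b']
    by_cases h : b' = b <;> simp [h]
  rw [Finset.sum_congr rfl (fun a' _ => hleft a'),
    Finset.sum_congr rfl (fun b' _ => hright b'),
    sum_if_eq a _ _, sum_if_eq b _ _]
  field_simp
  ring

lemma edge_rep {e : Sym2 (Fin m ⊕ Fin n)} (he : e ∈ (K).edgeSet) :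
    ∃ (a : Fin m) (b : Fin n), e = s(inl a, inr b) := by
  induction e using Sym2.ind with
  | _ u v =>
    rw [SimpleGraph.mem_edgeSet] at he
    match u, v with
    | inl a, inr b => exact ⟨a, b, rfl⟩
    | inr b, inl a => exact ⟨a, b, Sym2.eq_swap⟩
    | inl a, inl a' => exact absurd he (not_adj_ll a a')
    | inr b, inr b' => exact absurd he (not_adj_rr b b')

end EBAux


theorem stmt3 (m n : ℕ) (hm : 1 ≤ m) (hn : 1 ≤ n) (h : ¬(m = 1 ∧ n = 1)) :
    (∀ e ∈ (completeBipartiteGraph (Fin m) (Fin n)).edgeSet,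
      edgeBetweenness (completeBipartiteGraph (Fin m) (Fin n)) e =
        2 + 2 * ((n : ℚ) - 1) / m + 2 * ((m : ℚ) - 1) / n) ∧
    (∀ e₁ ∈ (completeBipartiteGraph (Fin m) (Fin n)).edgeSet,
     ∀ e₂ ∈ (completeBipartiteGraph (Fin m) (Fin n)).edgeSet,
      edgeBetweenness (completeBipartiteGraph (Fin m) (Fin n)) e₁ =
        edgeBetweenness (completeBipartiteGraph (Fin m) (Fin n)) e₂) := by
  have key' : ∀ e ∈ (completeBipartiteGraph (Fin m) (Fin n)).edgeSet,
      edgeBetweenness (completeBipartiteGraph (Fin m) (Fin n)) e =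
        2 + 2 * ((n : ℚ) - 1) / m + 2 * ((m : ℚ) - 1) / n := by
    intro e he
    obtain ⟨a, b, rfl⟩ := edge_rep he
    exact key hm hn a b
  exact ⟨key', fun e₁ h₁ e₂ h₂ => (key' e₁ h₁).trans (key' e₂ h₂).symm⟩
end

section
/- For k = 18n ± 3 and b = 6n, the circulant C_k(1,b) is not isomorphic to any circulant C_k(1,b') with 1 ≤ b' ≤ k/2 and b' ≠ b. -/
open SimpleGraph Finset

section Core
variable {k : ℕ} [NeZero k]

/-- difference operator: `(Dop c φ) v = φ (v + c) + φ v` over `𝔽₂`. -/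
def Dop (c : ZMod k) : (ZMod k → ZMod 2) →+ (ZMod k → ZMod 2) where
  toFun φ := fun v => φ (v + c) + φ v
  map_zero' := by ext v; simp
  map_add' := by intro f g; ext v; simp [Pi.add_apply]; abel

lemma Dop_apply (c : ZMod k) (φ : ZMod k → ZMod 2) (v : ZMod k) :
    Dop c φ v = φ (v + c) + φ v := rfl

omit [NeZero k] in
lemma zmod2_add_eq_zero_iff (a b : ZMod 2) : a + b = 0 ↔ a = b := by
  revert a b; decide

/-- The subgroup of periods of a function `φ`. -/
def periods (φ : ZMod k → ZMod 2) : AddSubgroup (ZMod k) where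
  carrier := {p | ∀ v, φ (v + p) = φ v}
  zero_mem' := by intro v; simp
  add_mem' := by
    intro a b ha hb v
    rw [← add_assoc, hb, ha]
  neg_mem' := by
    intro a ha v
    have := ha (v + -a)
    simp only [add_assoc, neg_add_cancel, add_zero] at this
    exact this.symm

lemma mem_periods {φ : ZMod k → ZMod 2} {p : ZMod k} :
    p ∈ periods φ ↔ ∀ v, φ (v + p) = φ v := Iff.rfl

lemma mem_ker_Dop {c : ZMod k} {φ : ZMod k → ZMod 2} :
    φ ∈ (Dop c).ker ↔ c ∈ periods φ := by
  rw [AddMonoidHom.mem_ker]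
  constructor
  · intro h v
    have := congrFun h v
    rw [Dop_apply] at this
    rw [← zmod2_add_eq_zero_iff]
    simpa using this
  · intro h
    ext v
    rw [Dop_apply, Pi.zero_apply, zmod2_add_eq_zero_iff]
    exact h v

lemma natCast_gcd_mem_periods {φ : ZMod k → ZMod 2} {c : ℕ}
    (h : (c : ZMod k) ∈ periods φ) : ((Nat.gcd k c : ℕ) : ZMod k) ∈ periods φ := by
  have hb : ((Nat.gcd k c : ℕ) : ZMod k) = (Nat.gcdB k c) • ((c : ℕ) : ZMod k) := by
    have := Nat.gcd_eq_gcd_ab k c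
    calc ((Nat.gcd k c : ℕ) : ZMod k) = (((Nat.gcd k c : ℕ) : ℤ) : ZMod k) := by push_cast; ring
    _ = ((k * Nat.gcdA k c + c * Nat.gcdB k c : ℤ) : ZMod k) := by rw [← this]
    _ = (Nat.gcdB k c) • ((c : ℕ) : ZMod k) := by
        push_cast
        rw [ZMod.natCast_self]
        rw [zsmul_eq_mul]
        ring
  rw [hb]
  exact AddSubgroup.zsmul_mem _ h _

lemma natCast_mem_periods_of_gcd {φ : ZMod k → ZMod 2} {c : ℕ}
    (h : ((Nat.gcd k c : ℕ) : ZMod k) ∈ periods φ) : (c : ZMod k) ∈ periods φ := by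
  have hc : (c : ZMod k) = (c / Nat.gcd k c) • ((Nat.gcd k c : ℕ) : ZMod k) := by
    rw [nsmul_eq_mul]
    rw [← Nat.cast_mul]
    congr 1
    exact (Nat.div_mul_cancel (Nat.gcd_dvd_right k c)).symm
  rw [hc]
  exact AddSubgroup.nsmul_mem _ h _

lemma ker_Dop_gcd (c : ℕ) :
    (Dop ((c : ℕ) : ZMod k)).ker = (Dop ((Nat.gcd k c : ℕ) : ZMod k)).ker := by
  ext φ
  rw [mem_ker_Dop, mem_ker_Dop]
  exact ⟨natCast_gcd_mem_periods, natCast_mem_periods_of_gcd⟩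

/-- iterated periodicity on naturals -/
lemma period_nat {φ : ZMod k → ZMod 2} {d : ℕ} (h : ((d : ℕ) : ZMod k) ∈ periods φ)
    (m t : ℕ) : φ ((m + t * d : ℕ) : ZMod k) = φ ((m : ℕ) : ZMod k) := by
  induction t with
  | zero => simp
  | succ t ih =>
    have : ((m + (t+1) * d : ℕ) : ZMod k) = ((m + t * d : ℕ) : ZMod k) + ((d : ℕ) : ZMod k) := by
      push_cast; ring
    rw [this, h _, ih]

/-- Functions with period `d` (where `d ∣ k`) biject with functions on `ZMod d`. -/
noncomputable def periodEquiv (d : ℕ) (hd : d ∣ k) (hd0 : d ≠ 0) :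
    {φ : ZMod k → ZMod 2 // ((d : ℕ) : ZMod k) ∈ periods φ} ≃ (ZMod d → ZMod 2) := by
  haveI : NeZero d := ⟨hd0⟩
  refine Equiv.symm ⟨fun ψ => ⟨fun v => ψ (ZMod.castHom hd (ZMod d) v), ?_⟩,
    fun φ => fun w => φ.1 ((w.val : ℕ) : ZMod k), ?_, ?_⟩
  · intro v
    show ψ (ZMod.castHom hd (ZMod d) (v + ((d : ℕ) : ZMod k))) = ψ (ZMod.castHom hd (ZMod d) v)
    rw [map_add, map_natCast, ZMod.natCast_self, add_zero]
  · intro ψ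
    funext w
    show ψ (ZMod.castHom hd (ZMod d) ((w.val : ℕ) : ZMod k)) = ψ w
    rw [map_natCast, ZMod.natCast_rightInverse w]
  · intro φ
    apply Subtype.ext
    funext v
    show φ.1 (((ZMod.castHom hd (ZMod d) v).val : ℕ) : ZMod k) = φ.1 v
    have hv : v = ((v.val : ℕ) : ZMod k) := (ZMod.natCast_rightInverse v).symm
    have hval : ((ZMod.castHom hd (ZMod d) v).val : ℕ) = v.val % d := by
      conv_lhs => rw [hv, map_natCast, ZMod.val_natCast]
    rw [hval]
    have h2 := period_nat φ.2 (v.val % d) (v.val / d)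
    rw [Nat.mod_add_div'] at h2
    conv_rhs => rw [hv]
    rw [← h2]

lemma card_period (d : ℕ) (hd : d ∣ k) (hd0 : d ≠ 0) :
    Nat.card {φ : ZMod k → ZMod 2 // ((d : ℕ) : ZMod k) ∈ periods φ} = 2 ^ d := by
  haveI : NeZero d := ⟨hd0⟩
  rw [Nat.card_congr (periodEquiv d hd hd0)]
  rw [Nat.card_eq_fintype_card, Fintype.card_fun, ZMod.card, ZMod.card]

lemma card_ker_Dop (c : ℕ) :
    Nat.card ((Dop ((c : ℕ) : ZMod k)).ker) = 2 ^ Nat.gcd k c := by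
  rw [ker_Dop_gcd]
  have : ((Dop ((Nat.gcd k c : ℕ) : ZMod k)).ker : Set (ZMod k → ZMod 2)) =
      {φ : ZMod k → ZMod 2 | ((Nat.gcd k c : ℕ) : ZMod k) ∈ periods φ} := by
    ext φ; exact mem_ker_Dop
  have hcong : Nat.card ((Dop ((Nat.gcd k c : ℕ) : ZMod k)).ker) =
      Nat.card {φ : ZMod k → ZMod 2 // ((Nat.gcd k c : ℕ) : ZMod k) ∈ periods φ} := by
    apply Nat.card_congr
    exact Equiv.subtypeEquivRight (fun φ => mem_ker_Dop)
  rw [hcong]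
  exact card_period _ (Nat.gcd_dvd_left k c) (Nat.gcd_ne_zero_left (NeZero.ne k))

end Core

set_option linter.unusedSectionVars false

section Count
variable {k : ℕ} [NeZero k]

lemma zmod2_add_self (x : ZMod 2) : x + x = 0 := by revert x; decide

/-- total sum functional -/
def Ltot : (ZMod k → ZMod 2) →+ ZMod 2 where
  toFun φ := ∑ v : ZMod k, φ v
  map_zero' := by simp
  map_add' := by intro f g; simp [Finset.sum_add_distrib]

lemma Ltot_apply (φ : ZMod k → ZMod 2) : Ltot φ = ∑ v : ZMod k, φ v := rfl

lemma sum_shift (c : ZMod k) (φ : ZMod k → ZMod 2) :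
    ∑ v : ZMod k, φ (v + c) = ∑ v : ZMod k, φ v :=
  Fintype.sum_equiv (Equiv.addRight c) _ _ (fun _ => rfl)

lemma Ltot_Dop (c : ZMod k) (φ : ZMod k → ZMod 2) : Ltot (Dop c φ) = 0 := by
  show ∑ v : ZMod k, (φ (v + c) + φ v) = 0
  rw [Finset.sum_add_distrib, sum_shift, zmod2_add_self]

lemma Dop_comm (a b : ZMod k) (φ : ZMod k → ZMod 2) (v : ZMod k) :
    Dop a (Dop b φ) v = Dop b (Dop a φ) v := by
  simp only [Dop_apply]
  rw [add_right_comm v a b]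
  abel

lemma card_eq_card_range_mul_card_ker {G H : Type*} [AddGroup G] [AddGroup H] (f : G →+ H) :
    Nat.card G = Nat.card f.range * Nat.card f.ker := by
  rw [AddSubgroup.card_eq_card_quotient_mul_card_addSubgroup f.ker]
  congr 1
  exact Nat.card_congr (QuotientAddGroup.quotientKerEquivRange f).toEquiv

lemma eq_const_of_one_mem_periods {φ : ZMod k → ZMod 2} (h : (1 : ZMod k) ∈ periods φ)
    (v : ZMod k) : φ v = φ 0 := by
  have key : ∀ t : ℕ, φ ((t : ℕ) : ZMod k) = φ 0 := by
    intro t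
    induction t with
    | zero => simp
    | succ t ih =>
      have : ((t + 1 : ℕ) : ZMod k) = ((t : ℕ) : ZMod k) + 1 := by push_cast; ring
      rw [this]
      have h2 := h ((t : ℕ) : ZMod k)
      rw [h2, ih]
  have hv : v = ((v.val : ℕ) : ZMod k) := (ZMod.natCast_rightInverse v).symm
  rw [hv, key]

lemma one_mem_periods_of_coprime {φ : ZMod k → ZMod 2} {a b : ℕ}
    (ha : ((a : ℕ) : ZMod k) ∈ periods φ) (hb : ((b : ℕ) : ZMod k) ∈ periods φ)
    (hco : Nat.gcd a b = 1) : (1 : ZMod k) ∈ periods φ := by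
  have h1 : (1 : ZMod k) = (Nat.gcdA a b) • ((a : ℕ) : ZMod k)
      + (Nat.gcdB a b) • ((b : ℕ) : ZMod k) := by
    have hg := Nat.gcd_eq_gcd_ab a b
    rw [hco] at hg
    calc (1 : ZMod k) = (((1 : ℕ) : ℤ) : ZMod k) := by push_cast; ring
    _ = ((a * Nat.gcdA a b + b * Nat.gcdB a b : ℤ) : ZMod k) := by rw [← hg]
    _ = _ := by push_cast [zsmul_eq_mul]; ring
  rw [h1]
  exact AddSubgroup.add_mem _ (AddSubgroup.zsmul_mem _ ha _) (AddSubgroup.zsmul_mem _ hb _)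

lemma odd_natCast_zmod_two {m : ℕ} (hm : m % 2 = 1) : ((m : ℕ) : ZMod 2) = 1 := by
  obtain ⟨t, ht⟩ : ∃ t, m = 2 * t + 1 := ⟨m / 2, by omega⟩
  subst ht
  push_cast
  rw [show (2 : ZMod 2) = 0 by decide]
  ring

lemma card_fiber (d : ℕ) (hd : d ∣ k) (hd0 : d ≠ 0) :
    (Finset.univ.filter (fun v : ZMod k => ZMod.castHom hd (ZMod d) v = 0)).card = k / d := by
  haveI : NeZero d := ⟨hd0⟩
  set f := (ZMod.castHom hd (ZMod d)).toAddMonoidHom with hf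
  have hsurj : Function.Surjective f := by
    intro w
    exact ⟨((w.val : ℕ) : ZMod k), by
      show ZMod.castHom hd (ZMod d) ((w.val : ℕ) : ZMod k) = w
      rw [map_natCast]; exact ZMod.natCast_rightInverse w⟩
  have hrange : f.range = ⊤ := by
    ext w; simp only [AddSubgroup.mem_top, iff_true, AddMonoidHom.mem_range]
    exact hsurj w
  have hcount := card_eq_card_range_mul_card_ker f
  rw [hrange] at hcount
  have htop : Nat.card (⊤ : AddSubgroup (ZMod d)) = d := by
    rw [Nat.card_congr AddSubgroup.topEquiv.toEquiv, Nat.card_eq_fintype_card, ZMod.card]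
  rw [Nat.card_eq_fintype_card, ZMod.card, htop] at hcount
  have hker : Nat.card f.ker = (Finset.univ.filter
      (fun v : ZMod k => ZMod.castHom hd (ZMod d) v = 0)).card := by
    rw [Nat.card_eq_fintype_card]
    rw [← Fintype.card_subtype]
    apply Fintype.card_congr
    exact Equiv.subtypeEquivRight (fun v => by
      simp only [AddMonoidHom.mem_ker]; exact Iff.rfl)
  rw [hker] at hcount
  have hc2 : k = (Finset.univ.filter
      (fun v : ZMod k => ZMod.castHom hd (ZMod d) v = 0)).card * d := by
    rw [mul_comm]; exact hcount
  exact (Nat.div_eq_of_eq_mul_left (Nat.pos_of_ne_zero hd0) hc2).symm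

lemma card_ker_DopDop (c1 c2 : ℕ) (hk2 : k % 2 = 1)
    (hco : Nat.Coprime (Nat.gcd k c1) (Nat.gcd k c2)) :
    Nat.card (((Dop ((c1 : ℕ) : ZMod k)).comp (Dop ((c2 : ℕ) : ZMod k))).ker)
      = 2 ^ (Nat.gcd k c1 + Nat.gcd k c2 - 1) := by
  set d1 := Nat.gcd k c1 with hd1
  set d2 := Nat.gcd k c2 with hd2
  have hk0 : k ≠ 0 := NeZero.ne k
  have hd1k : d1 ∣ k := Nat.gcd_dvd_left k c1
  have hd10 : d1 ≠ 0 := Nat.gcd_ne_zero_left hk0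
  have hd1pos : 1 ≤ d1 := Nat.one_le_iff_ne_zero.mpr hd10
  set U := (Dop ((c1 : ℕ) : ZMod k)).ker with hU
  -- the subgroup W' = U ⊓ ker Ltot
  set W' := U ⊓ Ltot.ker with hW'
  -- the test function φ0 ∈ U with Ltot φ0 = 1
  set π := ZMod.castHom hd1k (ZMod d1) with hπ
  set φ0 : ZMod k → ZMod 2 := fun v => if π v = 0 then 1 else 0 with hφ0
  have hφ0U : φ0 ∈ U := by
    rw [hU, mem_ker_Dop]
    apply natCast_mem_periods_of_gcd
    intro v
    have : π (v + ((d1 : ℕ) : ZMod k)) = π v := by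
      rw [map_add, map_natCast, ZMod.natCast_self, add_zero]
    simp only [hφ0, ← hd1, this]
  have hφ0L : Ltot φ0 = 1 := by
    rw [Ltot_apply]
    simp only [hφ0]
    rw [Finset.sum_boole]
    rw [card_fiber d1 hd1k hd10]
    apply odd_natCast_zmod_two
    set q := k / d1 with hq
    have hdvd : q ∣ k := Nat.div_dvd_of_dvd hd1k
    obtain ⟨t, ht⟩ := hdvd
    have hmod : (q * t) % 2 = ((q % 2) * (t % 2)) % 2 := Nat.mul_mod _ _ _
    rw [← ht] at hmod
    by_contra hxx
    have h0 : q % 2 = 0 := by omega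
    rw [h0, Nat.zero_mul, Nat.zero_mod] at hmod
    omega
  -- constants lemma packaged
  have hconst : ∀ φ : ZMod k → ZMod 2, φ ∈ U → φ ∈ (Dop ((c2 : ℕ) : ZMod k)).ker → ∀ v, φ v = φ 0 := by
    intro φ hφU hφB v
    apply eq_const_of_one_mem_periods
    exact one_mem_periods_of_coprime (natCast_gcd_mem_periods (mem_ker_Dop.mp hφU))
      (natCast_gcd_mem_periods (mem_ker_Dop.mp hφB)) hco
  have hcardU : Nat.card U = 2 ^ d1 := card_ker_Dop c1
  -- g : U →+ V, g = B ∘ incl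
  set g : U →+ (ZMod k → ZMod 2) := (Dop ((c2 : ℕ) : ZMod k)).comp U.subtype with hg
  have hgker : Nat.card g.ker = 2 := by
    have : Nat.card g.ker = Nat.card (ZMod 2) := by
      apply Nat.card_congr
      refine ⟨fun x => x.1.1 0, fun s => ⟨⟨fun _ => s, ?_⟩, ?_⟩, ?_, fun s => rfl⟩
      · rw [hU, mem_ker_Dop]; intro v; rfl
      · rw [AddMonoidHom.mem_ker]
        show Dop ((c2 : ℕ) : ZMod k) (fun _ => s) = 0
        funext v
        exact zmod2_add_self s
      · intro x
        apply Subtype.ext; apply Subtype.ext; funext v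
        show x.1.1 0 = x.1.1 v
        have hx := hconst x.1.1 x.1.2 (by
          have := x.2
          rw [AddMonoidHom.mem_ker] at this ⊢
          exact this)
        exact (hx v).symm
    rw [this, Nat.card_eq_fintype_card, ZMod.card]
  have hgU := card_eq_card_range_mul_card_ker g
  rw [hcardU, hgker] at hgU
  have hgrange : Nat.card g.range = 2 ^ (d1 - 1) := by
    have h2 : (2:ℕ) ^ d1 = 2 ^ (d1 - 1) * 2 := by
      rw [← pow_succ]; congr 1; omega
    omega
  -- h : U →+ ZMod 2, restriction of Ltot
  set h : U →+ ZMod 2 := Ltot.comp U.subtype with hh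
  have hhker : Nat.card h.ker = Nat.card W' := by
    apply Nat.card_congr
    refine ⟨fun x => ⟨x.1.1, ?_⟩, fun y => ⟨⟨y.1, ?_⟩, ?_⟩, fun x => rfl, fun y => rfl⟩
    · have hx2 := x.2
      rw [AddMonoidHom.mem_ker] at hx2
      exact AddSubgroup.mem_inf.mpr ⟨x.1.2, by rw [AddMonoidHom.mem_ker]; exact hx2⟩
    · exact (AddSubgroup.mem_inf.mp y.2).1
    · rw [AddMonoidHom.mem_ker]
      exact AddMonoidHom.mem_ker.mp (AddSubgroup.mem_inf.mp y.2).2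
  have hhrange : h.range = ⊤ := by
    have h1 : h ⟨φ0, hφ0U⟩ = 1 := hφ0L
    ext s
    simp only [AddSubgroup.mem_top, iff_true, AddMonoidHom.mem_range]
    have : s = 0 ∨ s = 1 := by revert s; decide
    rcases this with rfl | rfl
    · exact ⟨0, map_zero h⟩
    · exact ⟨⟨φ0, hφ0U⟩, h1⟩
  have hhU := card_eq_card_range_mul_card_ker h
  rw [hcardU, hhker, hhrange] at hhU
  have htop2 : Nat.card (⊤ : AddSubgroup (ZMod 2)) = 2 := by
    rw [Nat.card_congr AddSubgroup.topEquiv.toEquiv, Nat.card_eq_fintype_card, ZMod.card]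
  rw [htop2] at hhU
  have hcardW' : Nat.card W' = 2 ^ (d1 - 1) := by
    have h2 : (2:ℕ) ^ d1 = 2 * 2 ^ (d1 - 1) := by
      rw [← pow_succ']; congr 1; omega
    omega
  -- f : K →+ V
  set K := ((Dop ((c1 : ℕ) : ZMod k)).comp (Dop ((c2 : ℕ) : ZMod k))).ker with hK
  set f : K →+ (ZMod k → ZMod 2) := (Dop ((c2 : ℕ) : ZMod k)).comp K.subtype with hf
  have hfker : Nat.card f.ker = 2 ^ d2 := by
    have he : Nat.card f.ker = Nat.card ((Dop ((c2 : ℕ) : ZMod k)).ker) := by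
      apply Nat.card_congr
      refine ⟨fun x => ⟨x.1.1, ?_⟩, fun y => ⟨⟨y.1, ?_⟩, ?_⟩, fun x => rfl, fun y => rfl⟩
      · have hx2 := x.2
        rw [AddMonoidHom.mem_ker] at hx2 ⊢
        exact hx2
      · rw [AddMonoidHom.mem_ker]
        have hy2 := y.2
        rw [AddMonoidHom.mem_ker] at hy2
        rw [AddMonoidHom.comp_apply]
        show Dop ((c1 : ℕ) : ZMod k) (Dop ((c2 : ℕ) : ZMod k) y.1) = 0
        rw [hy2, map_zero]
      · rw [AddMonoidHom.mem_ker]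
        have hy2 := y.2
        rw [AddMonoidHom.mem_ker] at hy2
        exact hy2
    exact he.trans (card_ker_Dop c2)
  -- sandwich: g.range ≤ f.range ≤ W'
  have hgf : (g.range : Set (ZMod k → ZMod 2)) ⊆ (f.range : Set (ZMod k → ZMod 2)) := by
    intro ψ hψ
    obtain ⟨x, hx⟩ := hψ
    have hxK : x.1 ∈ K := by
      apply AddMonoidHom.mem_ker.mpr
      show Dop ((c1 : ℕ) : ZMod k) (Dop ((c2 : ℕ) : ZMod k) x.1) = 0
      funext v
      show Dop ((c1 : ℕ) : ZMod k) (Dop ((c2 : ℕ) : ZMod k) x.1) v = 0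
      rw [Dop_comm]
      have hx2 : Dop ((c1 : ℕ) : ZMod k) x.1 = 0 := x.2
      rw [hx2, map_zero]
      rfl
    exact ⟨⟨x.1, hxK⟩, hx⟩
  have hfW' : (f.range : Set (ZMod k → ZMod 2)) ⊆ (W' : Set (ZMod k → ZMod 2)) := by
    intro ψ hψ
    obtain ⟨x, hx⟩ := hψ
    have hxK : Dop ((c1 : ℕ) : ZMod k) (Dop ((c2 : ℕ) : ZMod k) x.1) = 0 :=
      AddMonoidHom.mem_ker.mp x.2
    have hψU : ψ ∈ U := by
      rw [hU, AddMonoidHom.mem_ker, ← hx]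
      exact hxK
    have hψL : ψ ∈ Ltot.ker := by
      rw [AddMonoidHom.mem_ker, ← hx]
      exact Ltot_Dop _ _
    exact AddSubgroup.mem_inf.mpr ⟨hψU, hψL⟩
  have hcards : Nat.card f.range = 2 ^ (d1 - 1) := by
    have h1 : Nat.card g.range ≤ Nat.card f.range :=
      Nat.card_mono (Set.toFinite _) hgf
    have h2 : Nat.card f.range ≤ Nat.card W' :=
      Nat.card_mono (Set.toFinite _) hfW'
    omega
  have hKcard := card_eq_card_range_mul_card_ker f
  rw [hcards, hfker] at hKcard
  rw [hKcard, ← pow_add]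
  congr 1
  omega

end Count

section Graph
open SimpleGraph

open Classical in
/-- The number of `𝔽₂`-valued functions whose sum over every neighborhood vanishes.
This is a graph-isomorphism invariant. -/
noncomputable def adjKerCard {V : Type*} [Fintype V] (G : SimpleGraph V) : ℕ :=
  Nat.card {φ : V → ZMod 2 // ∀ v : V, ∑ u : V, (if G.Adj v u then φ u else 0) = 0}

lemma adjKerCard_eq_of_equiv {V W : Type*} [Fintype V] [Fintype W] {G : SimpleGraph V}
    {G' : SimpleGraph W} (σ : V ≃ W) (hadj : ∀ a b, G'.Adj (σ a) (σ b) ↔ G.Adj a b) :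
    adjKerCard G = adjKerCard G' := by
  classical
  have key : ∀ (φ : V → ZMod 2) (w : W),
      (∑ u : W, if G'.Adj w u then φ (σ.symm u) else 0)
        = ∑ x : V, if G.Adj (σ.symm w) x then φ x else 0 := by
    intro φ w
    rw [← Equiv.sum_comp σ (fun u => if G'.Adj w u then φ (σ.symm u) else 0)]
    apply Finset.sum_congr rfl
    intro x _
    have h2 : G'.Adj w (σ x) ↔ G.Adj (σ.symm w) x := by
      have h3 := hadj (σ.symm w) x
      rw [σ.apply_symm_apply] at h3
      exact h3
    by_cases h : G.Adj (σ.symm w) x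
    · rw [if_pos (h2.mpr h), if_pos h, σ.symm_apply_apply]
    · rw [if_neg (fun hc => h (h2.mp hc)), if_neg h]
  have key' : ∀ (ψ : W → ZMod 2) (v : V),
      (∑ x : V, if G.Adj v x then ψ (σ x) else 0)
        = ∑ u : W, if G'.Adj (σ v) u then ψ u else 0 := by
    intro ψ v
    rw [← Equiv.sum_comp σ (fun u => if G'.Adj (σ v) u then ψ u else 0)]
    apply Finset.sum_congr rfl
    intro x _
    have h2 : G'.Adj (σ v) (σ x) ↔ G.Adj v x := hadj v x
    by_cases h : G.Adj v x
    · rw [if_pos h, if_pos (h2.mpr h)]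
    · rw [if_neg h, if_neg (fun hc => h (h2.mp hc))]
  apply Nat.card_congr
  refine ⟨fun φ => ⟨fun w => φ.1 (σ.symm w), ?_⟩, fun ψ => ⟨fun v => ψ.1 (σ v), ?_⟩, ?_, ?_⟩
  · intro w
    rw [key]
    exact φ.2 _
  · intro v
    rw [key']
    exact ψ.2 _
  · intro φ
    apply Subtype.ext
    funext v
    show φ.1 (σ.symm (σ v)) = φ.1 v
    rw [σ.symm_apply_apply]
  · intro ψ
    apply Subtype.ext
    funext w
    show ψ.1 (σ (σ.symm w)) = ψ.1 w
    rw [σ.apply_symm_apply]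

lemma adjKerCard_eq_of_iso {V W : Type*} [Fintype V] [Fintype W] {G : SimpleGraph V}
    {G' : SimpleGraph W} (e : G ≃g G') : adjKerCard G = adjKerCard G' :=
  adjKerCard_eq_of_equiv e.toEquiv (fun _ _ => e.map_adj_iff)

end Graph

section Circ
open SimpleGraph
variable {k : ℕ} [NeZero k]

lemma natCast_ne_zero_of_lt {m : ℕ} (h0 : 0 < m) (hm : m < k) : ((m : ℕ) : ZMod k) ≠ 0 := by
  intro h
  rw [ZMod.natCast_eq_zero_iff] at h
  have := Nat.le_of_dvd h0 h
  omega

lemma adjKerCard_circulant (β : ℕ) (hβ2 : 2 ≤ β) (hβk : 2 * β + 1 ≤ k) (hk2 : k % 2 = 1) :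
    adjKerCard (circulantGraph ({1, -1, ((β : ℕ) : ZMod k), -((β : ℕ) : ZMod k)} : Set (ZMod k)))
      = 2 ^ (Nat.gcd k (β + 1) + Nat.gcd k (β - 1) - 1) := by
  classical
  have hk5 : 5 ≤ k := by omega
  set b : ZMod k := ((β : ℕ) : ZMod k) with hbdef
  set S : Set (ZMod k) := {1, -1, b, -b} with hS
  -- basic distinctness facts
  have e1 : (1 : ZMod k) ≠ 0 := by
    have := natCast_ne_zero_of_lt (k := k) (m := 1) (by norm_num) (by omega)
    simpa using this
  have e2 : (1 : ZMod k) + 1 ≠ 0 := by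
    have := natCast_ne_zero_of_lt (k := k) (m := 2) (by norm_num) (by omega)
    intro h; apply this; push_cast; linear_combination h
  have eb : b ≠ 0 := by
    have := natCast_ne_zero_of_lt (k := k) (m := β) (by omega) (by omega)
    simpa [hbdef] using this
  have ebm1 : b - 1 ≠ 0 := by
    have := natCast_ne_zero_of_lt (k := k) (m := β - 1) (by omega) (by omega)
    intro h; apply this
    rw [Nat.cast_sub (by omega : 1 ≤ β)]
    push_cast
    linear_combination h
  have ebp1 : b + 1 ≠ 0 := by
    have := natCast_ne_zero_of_lt (k := k) (m := β + 1) (by omega) (by omega)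
    intro h; apply this; push_cast; linear_combination h
  have e2b : b + b ≠ 0 := by
    have := natCast_ne_zero_of_lt (k := k) (m := 2 * β) (by omega) (by omega)
    intro h; apply this; push_cast; linear_combination h
  -- membership description of S
  have hmemS : ∀ x : ZMod k, x ∈ S ↔ (x = 1 ∨ x = -1 ∨ x = b ∨ x = -b) := by
    intro x; simp [hS, Set.mem_insert_iff]
  -- adjacency description
  have hadj : ∀ v u : ZMod k, (circulantGraph S).Adj v u ↔
      u ∈ ({v + 1, v - 1, v + b, v - b} : Finset (ZMod k)) := by
    intro v u
    rw [circulantGraph_adj]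
    simp only [Finset.mem_insert, Finset.mem_singleton]
    constructor
    · rintro ⟨hne, h | h⟩
      · rw [hmemS] at h
        rcases h with h | h | h | h
        · right; left; linear_combination -h
        · left; linear_combination -h
        · right; right; right; linear_combination -h
        · right; right; left; linear_combination -h
      · rw [hmemS] at h
        rcases h with h | h | h | h
        · left; linear_combination h
        · right; left; linear_combination h
        · right; right; left; linear_combination h
        · right; right; right; linear_combination h
    · rintro (rfl | rfl | rfl | rfl)
      · exact ⟨by intro h; exact e1 (by linear_combination -h), Or.inr (by
          rw [hmemS]; left; ring)⟩
      · exact ⟨by intro h; exact e1 (by linear_combination h), Or.inr (by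
          rw [hmemS]; right; left; ring)⟩
      · exact ⟨by intro h; exact eb (by linear_combination -h), Or.inr (by
          rw [hmemS]; right; right; left; ring)⟩
      · exact ⟨by intro h; exact eb (by linear_combination h), Or.inr (by
          rw [hmemS]; right; right; right; ring)⟩
  -- the neighborhood sum
  have hre : ∀ (φ : ZMod k → ZMod 2) (v : ZMod k),
      (∑ u : ZMod k, if (circulantGraph S).Adj v u then φ u else 0)
        = φ (v+1) + φ (v-1) + φ (v+b) + φ (v-b) := by
    intro φ v
    have d1 : v + 1 ∉ ({v - 1, v + b, v - b} : Finset (ZMod k)) := by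
      simp only [Finset.mem_insert, Finset.mem_singleton]
      push_neg
      refine ⟨fun h => e2 (by linear_combination h), fun h => ebm1 (by linear_combination -h),
        fun h => ebp1 (by linear_combination h)⟩
    have d2 : v - 1 ∉ ({v + b, v - b} : Finset (ZMod k)) := by
      simp only [Finset.mem_insert, Finset.mem_singleton]
      push_neg
      refine ⟨fun h => ebp1 (by linear_combination -h), fun h => ebm1 (by linear_combination h)⟩
    have d3 : v + b ∉ ({v - b} : Finset (ZMod k)) := by
      simp only [Finset.mem_singleton]
      exact fun h => e2b (by linear_combination h)
    calc (∑ u : ZMod k, if (circulantGraph S).Adj v u then φ u else 0)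
        = ∑ u : ZMod k, (if u ∈ ({v + 1, v - 1, v + b, v - b} : Finset (ZMod k))
            then φ u else 0) := by
          apply Finset.sum_congr rfl
          intro u _
          exact if_congr (hadj v u) rfl rfl
      _ = ∑ u ∈ ({v + 1, v - 1, v + b, v - b} : Finset (ZMod k)), φ u :=
          Fintype.sum_ite_mem _ _
      _ = φ (v+1) + φ (v-1) + φ (v+b) + φ (v-b) := by
          rw [Finset.sum_insert d1, Finset.sum_insert d2, Finset.sum_insert d3,
            Finset.sum_singleton]
          ring
  -- cast facts
  have hc1 : (((β + 1 : ℕ)) : ZMod k) = b + 1 := by push_cast; ring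
  have hc2 : (((β - 1 : ℕ)) : ZMod k) = b - 1 := by
    rw [Nat.cast_sub (by omega : 1 ≤ β)]; push_cast; ring
  -- condition equivalences
  have hcond : ∀ φ : ZMod k → ZMod 2,
      (∀ v : ZMod k, (∑ u : ZMod k, if (circulantGraph S).Adj v u then φ u else 0) = 0)
        ↔ φ ∈ ((Dop (((β + 1 : ℕ)) : ZMod k)).comp (Dop (((β - 1 : ℕ)) : ZMod k))).ker := by
    intro φ
    rw [AddMonoidHom.mem_ker]
    constructor
    · intro h
      funext v
      simp only [AddMonoidHom.comp_apply, Dop_apply, hc1, hc2, Pi.zero_apply]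
      have h0 := h (v + b)
      rw [hre] at h0
      rw [show v + b + 1 = v + (b+1) by ring, show v + b - 1 = v + (b-1) by ring,
        show v + b + b = v + (b+1) + (b-1) by ring, show v + b - b = v by ring] at h0
      linear_combination h0
    · intro h v
      rw [hre]
      have h0 := congrFun h (v - b)
      simp only [AddMonoidHom.comp_apply, Dop_apply, hc1, hc2, Pi.zero_apply] at h0
      rw [show v - b + (b+1) + (b-1) = v + b by ring, show v - b + (b+1) = v + 1 by ring,
        show v - b + (b-1) = v - 1 by ring] at h0
      linear_combination h0
  -- coprimality of the two gcds
  have hco : Nat.Coprime (Nat.gcd k (β + 1)) (Nat.gcd k (β - 1)) := by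
    set d := Nat.gcd (Nat.gcd k (β + 1)) (Nat.gcd k (β - 1)) with hd
    have hdk : d ∣ k := dvd_trans (Nat.gcd_dvd_left _ _) (Nat.gcd_dvd_left _ _)
    have hdp : d ∣ β + 1 := dvd_trans (Nat.gcd_dvd_left _ _) (Nat.gcd_dvd_right _ _)
    have hdm : d ∣ β - 1 := dvd_trans (Nat.gcd_dvd_right _ _) (Nat.gcd_dvd_right _ _)
    have hd2 : d ∣ 2 := by
      have := Nat.dvd_sub hdp hdm
      rwa [show β + 1 - (β - 1) = 2 by omega] at this
    have hdle : d ≤ 2 := Nat.le_of_dvd (by norm_num) hd2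
    have hd0 : d ≠ 0 := by
      intro h0
      rw [h0] at hdk
      have := Nat.eq_zero_of_zero_dvd hdk
      omega
    have : d = 1 ∨ d = 2 := by omega
    rcases this with h1 | h2
    · exact h1
    · exfalso
      rw [h2] at hdk
      obtain ⟨t, ht⟩ := hdk
      omega
  -- conclude
  unfold adjKerCard
  refine Eq.trans (Nat.card_congr (Equiv.subtypeEquivRight ?_))
    (card_ker_DopDop (β + 1) (β - 1) hk2 hco)
  intro φ
  convert hcond φ using 3
  refine Finset.sum_congr rfl fun u _ => ?_
  congr 1

end Circ

section Cycle
open SimpleGraph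
variable {k : ℕ} [NeZero k]

lemma adjKerCard_cycle (hk5 : 5 ≤ k) (hk2 : k % 2 = 1) :
    adjKerCard (circulantGraph
      ({1, -1, ((1 : ℕ) : ZMod k), -((1 : ℕ) : ZMod k)} : Set (ZMod k))) = 2 := by
  classical
  set S : Set (ZMod k) := {1, -1, ((1 : ℕ) : ZMod k), -((1 : ℕ) : ZMod k)} with hS
  have e1 : (1 : ZMod k) ≠ 0 := by
    have := natCast_ne_zero_of_lt (k := k) (m := 1) (by norm_num) (by omega)
    simpa using this
  have e2 : (1 : ZMod k) + 1 ≠ 0 := by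
    have := natCast_ne_zero_of_lt (k := k) (m := 2) (by norm_num) (by omega)
    intro h; apply this; push_cast; linear_combination h
  have hmemS : ∀ x : ZMod k, x ∈ S ↔ (x = 1 ∨ x = -1) := by
    intro x
    simp only [hS, Set.mem_insert_iff, Set.mem_singleton_iff, Nat.cast_one]
    tauto
  have hadj : ∀ v u : ZMod k, (circulantGraph S).Adj v u ↔
      u ∈ ({v + 1, v - 1} : Finset (ZMod k)) := by
    intro v u
    rw [circulantGraph_adj]
    simp only [Finset.mem_insert, Finset.mem_singleton]
    constructor
    · rintro ⟨hne, h | h⟩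
      · rw [hmemS] at h
        rcases h with h | h
        · right; linear_combination -h
        · left; linear_combination -h
      · rw [hmemS] at h
        rcases h with h | h
        · left; linear_combination h
        · right; linear_combination h
    · rintro (rfl | rfl)
      · exact ⟨by intro h; exact e1 (by linear_combination -h), Or.inr (by
          rw [hmemS]; left; ring)⟩
      · exact ⟨by intro h; exact e1 (by linear_combination h), Or.inr (by
          rw [hmemS]; right; ring)⟩
  have hre : ∀ (φ : ZMod k → ZMod 2) (v : ZMod k),
      (∑ u : ZMod k, if (circulantGraph S).Adj v u then φ u else 0)
        = φ (v+1) + φ (v-1) := by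
    intro φ v
    have d1 : v + 1 ∉ ({v - 1} : Finset (ZMod k)) := by
      simp only [Finset.mem_singleton]
      exact fun h => e2 (by linear_combination h)
    calc (∑ u : ZMod k, if (circulantGraph S).Adj v u then φ u else 0)
        = ∑ u : ZMod k, (if u ∈ ({v + 1, v - 1} : Finset (ZMod k)) then φ u else 0) := by
          apply Finset.sum_congr rfl
          intro u _
          exact if_congr (hadj v u) rfl rfl
      _ = ∑ u ∈ ({v + 1, v - 1} : Finset (ZMod k)), φ u := Fintype.sum_ite_mem _ _
      _ = φ (v+1) + φ (v-1) := by
          rw [Finset.sum_insert d1, Finset.sum_singleton]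
  have hc : ((2 : ℕ) : ZMod k) = 1 + 1 := by push_cast; ring
  have hcond : ∀ φ : ZMod k → ZMod 2,
      (∀ v : ZMod k, (∑ u : ZMod k, if (circulantGraph S).Adj v u then φ u else 0) = 0)
        ↔ φ ∈ (Dop (((2 : ℕ)) : ZMod k)).ker := by
    intro φ
    rw [mem_ker_Dop]
    constructor
    · intro h w
      have h0 := h (w + 1)
      rw [hre] at h0
      rw [show w + 1 + 1 = w + ((2:ℕ) : ZMod k) by rw [hc]; ring,
        show w + 1 - 1 = w by ring] at h0
      exact (zmod2_add_eq_zero_iff _ _).mp h0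
    · intro h v
      rw [hre]
      have h1 := h (v - 1)
      rw [show v - 1 + ((2:ℕ) : ZMod k) = v + 1 by rw [hc]; ring] at h1
      rw [h1]
      exact zmod2_add_self _
  have hg : Nat.gcd k 2 = 1 := by
    have h1 : Nat.gcd k 2 ∣ 2 := Nat.gcd_dvd_right _ _
    have h2 : Nat.gcd k 2 ∣ k := Nat.gcd_dvd_left _ _
    have h3 : Nat.gcd k 2 ≤ 2 := Nat.le_of_dvd (by norm_num) h1
    have h4 : Nat.gcd k 2 ≠ 0 := by
      intro h0
      rw [h0] at h2
      have := Nat.eq_zero_of_zero_dvd h2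
      omega
    have : Nat.gcd k 2 = 1 ∨ Nat.gcd k 2 = 2 := by omega
    rcases this with h | h
    · exact h
    · exfalso
      rw [h] at h2
      obtain ⟨t, ht⟩ := h2
      omega
  unfold adjKerCard
  refine Eq.trans (Nat.card_congr (Equiv.subtypeEquivRight
      (q := fun φ => φ ∈ (Dop (((2 : ℕ)) : ZMod k)).ker) ?_)) ?_
  · intro φ
    convert hcond φ using 3
    refine Finset.sum_congr rfl fun u _ => ?_
    congr 1
  · rw [card_ker_Dop 2, hg, pow_one]

end Cycle

section NT

lemma NTaux {M e1 d2 : ℕ} (hModd : M % 2 = 1) (heq : 3 * e1 + d2 = M + 1)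
    (hprod : e1 * d2 = M) (he1 : 1 ≤ e1) : False := by
  rcases Nat.lt_or_ge e1 2 with h | h
  · have h1 : e1 = 1 := by omega
    subst h1
    rw [one_mul] at hprod
    omega
  · have key : d2 * (e1 - 1) = 3 * e1 - 1 := by
    -- d2 * (e1 - 1) + d2 = d2 * e1
      obtain ⟨e, rfl⟩ : ∃ e, e1 = e + 1 := ⟨e1 - 1, by omega⟩
      have hlink : d2 * (e + 1 - 1) + d2 = d2 * (e + 1) := by
        rw [Nat.add_sub_cancel]; ring
      have hpp : d2 * (e + 1) = M := by rw [mul_comm]; exact hprod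
      omega
    have hdvd : (e1 - 1) ∣ 2 := by
      have h3 : (e1 - 1) ∣ d2 * (e1 - 1) := dvd_mul_left _ _
      rw [key] at h3
      have h4 : (e1 - 1) ∣ 3 * (e1 - 1) := dvd_mul_left _ _
      have h5 := Nat.dvd_sub h3 h4
      rwa [show 3 * e1 - 1 - 3 * (e1 - 1) = 2 by omega] at h5
    have h6 : e1 - 1 ≤ 2 := Nat.le_of_dvd (by norm_num) hdvd
    have : e1 = 2 ∨ e1 = 3 := by omega
    rcases this with rfl | rfl
    · have hd2 : d2 = 5 := by omega
      subst hd2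
      norm_num at hprod
      omega
    · have hd2 : d2 = 4 := by omega
      subst hd2
      norm_num at hprod
      omega

lemma NT {M d1 d2 : ℕ} (hM5 : 5 ≤ M) (hModd : M % 2 = 1) (hM3 : ¬ 3 ∣ M)
    (h1 : d1 ∣ 3 * M) (h2 : d2 ∣ 3 * M) (hco : Nat.Coprime d1 d2)
    (hsum : d1 + d2 = M + 1) : (d1 = 1 ∧ d2 = M) ∨ (d1 = M ∧ d2 = 1) := by
  have hprod : d1 * d2 ∣ 3 * M := Nat.Coprime.mul_dvd_of_dvd_of_dvd hco h1 h2
  have hd1pos : 1 ≤ d1 := Nat.pos_of_dvd_of_pos h1 (by omega)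
  have hd2pos : 1 ≤ d2 := Nat.pos_of_dvd_of_pos h2 (by omega)
  have hge : M ≤ d1 * d2 := by nlinarith
  obtain ⟨t, ht⟩ := hprod
  have ht1 : 1 ≤ t := by
    rcases Nat.eq_zero_or_pos t with h0 | h0
    · subst h0; rw [mul_zero] at ht; omega
    · exact h0
  have ht3 : t ≤ 3 := by nlinarith
  have : t = 1 ∨ t = 2 ∨ t = 3 := by omega
  rcases this with rfl | rfl | rfl
  · -- d1 * d2 = 3 * M : derive contradiction
    exfalso
    rw [mul_one] at ht
    have h3p : Nat.Prime 3 := by norm_num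
    have h3d : (3 : ℕ) ∣ d1 * d2 := ⟨M, ht.symm⟩
    rcases (Nat.Prime.dvd_mul h3p).mp h3d with hd | hd
    · obtain ⟨e1, rfl⟩ := hd
      have he1 : 1 ≤ e1 := by omega
      have hpp : e1 * d2 = M := by
        have : 3 * (e1 * d2) = 3 * M := by rw [← mul_assoc]; exact ht.symm
        omega
      exact NTaux hModd (by omega) hpp he1
    · obtain ⟨e2, rfl⟩ := hd
      have he2 : 1 ≤ e2 := by omega
      have hpp : e2 * d1 = M := by
        have : 3 * (e2 * d1) = 3 * M := by
          rw [show 3 * (e2 * d1) = d1 * (3 * e2) by ring]; exact ht.symm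
        omega
      exact NTaux hModd (by omega) hpp he2
  · exfalso
    omega
  · have hM : d1 * d2 = M := by omega
    have hMz : (d1 : ℤ) * (d2 : ℤ) = (M : ℤ) := by exact_mod_cast hM
    have hsumz : (d1 : ℤ) + (d2 : ℤ) = (M : ℤ) + 1 := by exact_mod_cast hsum
    have hz : ((d1 : ℤ) - 1) * ((d2 : ℤ) - 1) = 0 := by linear_combination hMz - hsumz
    rcases mul_eq_zero.mp hz with hz1 | hz2
    · left
      have : d1 = 1 := by
        have : (d1 : ℤ) = 1 := by linarith
        exact_mod_cast this
      exact ⟨this, by omega⟩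
    · right
      have : d2 = 1 := by
        have : (d2 : ℤ) = 1 := by linarith
        exact_mod_cast this
      exact ⟨by omega, this⟩

end NT

section Final
open SimpleGraph

lemma gcd_helper {a b s : ℕ} (hdvd : Nat.gcd a b ∣ s) (hsb : Nat.gcd s b = 1) :
    Nat.gcd a b = 1 := by
  have h := Nat.dvd_gcd hdvd (Nat.gcd_dvd_right a b)
  rw [hsb] at h
  exact Nat.dvd_one.mp h

theorem stmt14' (n : ℕ) (hn : 1 ≤ n) (k : ℕ) (hk : k = 18 * n - 3 ∨ k = 18 * n + 3)
    (b' : ℕ) (hb'1 : 1 ≤ b') (hb'2 : 2 * b' ≤ k) (hb'ne : b' ≠ 6 * n) :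
    IsEmpty
      ((circulantGraph ({1, -1, (6 * n : ZMod k), -(6 * n : ZMod k)} : Set (ZMod k))) ≃g
        (circulantGraph ({1, -1, (b' : ZMod k), -(b' : ZMod k)} : Set (ZMod k)))) := by
  constructor
  intro e
  haveI : NeZero k := ⟨by rcases hk with rfl | rfl <;> omega⟩
  have hkodd : k % 2 = 1 := by rcases hk with rfl | rfl <;> omega
  have hk15 : 15 ≤ k := by rcases hk with rfl | rfl <;> omega
  have hinv := adjKerCard_eq_of_iso e
  have hc6 : ((6 * n : ℕ) : ZMod k) = (6 * (n : ZMod k)) := by push_cast; ring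
  have h1 : adjKerCard (circulantGraph
      ({1, -1, (6 * (n : ZMod k)), -(6 * (n : ZMod k))} : Set (ZMod k)))
      = 2 ^ (Nat.gcd k (6 * n + 1) + Nat.gcd k (6 * n - 1) - 1) := by
    rw [← hc6]
    exact adjKerCard_circulant (6 * n) (by omega) (by rcases hk with rfl | rfl <;> omega) hkodd
  -- coprimality facts used repeatedly: gcd 2 k = 1 pattern packed inside
  rcases Nat.lt_or_ge b' 2 with hb'lt | hb'ge
  · -- b' = 1 : the other graph is a cycle, kernel has size 2
    have hb'eq : b' = 1 := by omega
    subst hb'eq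
    have h2 : adjKerCard (circulantGraph
        ({1, -1, ((1 : ℕ) : ZMod k), -((1 : ℕ) : ZMod k)} : Set (ZMod k))) = 2 :=
      adjKerCard_cycle (by omega) hkodd
    rw [h1, h2] at hinv
    -- 2 ^ E = 2 with E ≥ 4 : contradiction
    have hE := Nat.pow_right_injective (le_refl 2)
      (hinv.trans (pow_one 2).symm)
    have hgApos : Nat.gcd k (6 * n + 1) ≠ 0 := fun h =>
      by have := Nat.eq_zero_of_gcd_eq_zero_left h; omega
    have hgB : Nat.gcd k (6 * n - 1) = 6 * n - 1 ∨
        Nat.gcd k (6 * n + 1) = 6 * n + 1 := by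
      rcases hk with rfl | rfl
      · left; exact Nat.gcd_eq_right ⟨3, by omega⟩
      · right; exact Nat.gcd_eq_right ⟨3, by omega⟩
    have hgBpos : Nat.gcd k (6 * n - 1) ≠ 0 := fun h =>
      by have := Nat.eq_zero_of_gcd_eq_zero_left h; omega
    rcases hgB with h | h <;> omega
  · -- b' ≥ 2
    have h2 : adjKerCard (circulantGraph
        ({1, -1, ((b' : ℕ) : ZMod k), -((b' : ℕ) : ZMod k)} : Set (ZMod k)))
        = 2 ^ (Nat.gcd k (b' + 1) + Nat.gcd k (b' - 1) - 1) :=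
      adjKerCard_circulant b' hb'ge (by omega) hkodd
    rw [h1, h2] at hinv
    have hE := Nat.pow_right_injective (le_refl 2) hinv
    set d1 := Nat.gcd k (b' + 1) with hd1
    set d2 := Nat.gcd k (b' - 1) with hd2
    have hd1pos : d1 ≠ 0 := fun h =>
      by have := Nat.eq_zero_of_gcd_eq_zero_left h; omega
    have hd2pos : d2 ≠ 0 := fun h =>
      by have := Nat.eq_zero_of_gcd_eq_zero_left h; omega
    have hco : Nat.Coprime d1 d2 := by
      have ha : Nat.gcd d1 d2 ∣ 2 := by
        have h1' : Nat.gcd d1 d2 ∣ b' + 1 :=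
          dvd_trans (Nat.gcd_dvd_left _ _) (Nat.gcd_dvd_right _ _)
        have h2' : Nat.gcd d1 d2 ∣ b' - 1 :=
          dvd_trans (Nat.gcd_dvd_right _ _) (Nat.gcd_dvd_right _ _)
        have := Nat.dvd_sub h1' h2'
        rwa [show b' + 1 - (b' - 1) = 2 by omega] at this
      have hb : Nat.gcd d1 d2 ∣ k :=
        dvd_trans (Nat.gcd_dvd_left _ _) (Nat.gcd_dvd_left _ _)
      have hc : Nat.gcd d1 d2 ∣ Nat.gcd 2 k := Nat.dvd_gcd ha hb
      have h2k : Nat.gcd 2 k = 1 := by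
        rw [Nat.gcd_rec, show k % 2 = 1 from hkodd]
        norm_num
      rw [h2k] at hc
      exact Nat.dvd_one.mp hc
    rcases hk with hkeq | hkeq
    · -- k = 18n - 3, M = 6n - 1
      have hgA : Nat.gcd k (6 * n + 1) = 1 := by
        apply gcd_helper (s := 6)
        · have hx : Nat.gcd k (6 * n + 1) ∣ 3 * (6 * n + 1) :=
            Dvd.dvd.mul_left (Nat.gcd_dvd_right _ _) 3
          have hy : Nat.gcd k (6 * n + 1) ∣ k := Nat.gcd_dvd_left _ _
          have := Nat.dvd_sub hx hy
          rwa [show 3 * (6 * n + 1) - k = 6 by omega] at this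
        · rw [Nat.gcd_rec, show (6 * n + 1) % 6 = 1 by omega]
          norm_num
      have hgB : Nat.gcd k (6 * n - 1) = 6 * n - 1 := Nat.gcd_eq_right ⟨3, by omega⟩
      rw [hgA, hgB] at hE
      have hsum : d1 + d2 = (6 * n - 1) + 1 := by omega
      have hNT := NT (M := 6 * n - 1) (by omega) (by omega)
        (by rintro ⟨t, ht⟩; omega)
        (by rw [show 3 * (6 * n - 1) = k by omega]; exact Nat.gcd_dvd_left _ _)
        (by rw [show 3 * (6 * n - 1) = k by omega]; exact Nat.gcd_dvd_left _ _)
        hco hsum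
      rcases hNT with ⟨hA, hB⟩ | ⟨hA, hB⟩
      · -- d2 = M : (6n-1) ∣ b' - 1, forces b' = 6n, contradiction
        have hdd : (6 * n - 1) ∣ (b' - 1) := by
          rw [← hB]
          exact Nat.gcd_dvd_right _ _
        obtain ⟨t, htt⟩ := hdd
        have ht1 : t = 1 := by
          rcases Nat.lt_or_ge t 1 with h0 | h0
          · exfalso
            have ht0 : t = 0 := by omega
            rw [ht0, Nat.mul_zero] at htt
            omega
          rcases Nat.lt_or_ge t 2 with h | h
          · omega
          · exfalso
            have hmul : (6 * n - 1) * 2 ≤ (6 * n - 1) * t := Nat.mul_le_mul_left _ h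
            omega
        rw [ht1, Nat.mul_one] at htt
        omega
      · -- d1 = M : (6n-1) ∣ b' + 1, forces b' = 6n - 2, then d2 = 3 * gcd ≠ 1
        have hdd : (6 * n - 1) ∣ (b' + 1) := by
          rw [← hA]
          exact Nat.gcd_dvd_right _ _
        obtain ⟨t, htt⟩ := hdd
        have ht1 : t = 1 := by
          rcases Nat.lt_or_ge t 1 with h0 | h0
          · exfalso
            have ht0 : t = 0 := by omega
            rw [ht0, Nat.mul_zero] at htt
            omega
          rcases Nat.lt_or_ge t 2 with h | h
          · omega
          · exfalso
            have hmul : (6 * n - 1) * 2 ≤ (6 * n - 1) * t := Nat.mul_le_mul_left _ h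
            omega
        rw [ht1, Nat.mul_one] at htt
        have hb'val : b' = 6 * n - 2 := by omega
        have h3g : Nat.gcd k (b' - 1) = 3 * Nat.gcd (6 * n - 1) (2 * n - 1) := by
          rw [show k = 3 * (6 * n - 1) by omega, show b' - 1 = 3 * (2 * n - 1) by omega]
          exact Nat.gcd_mul_left 3 _ _
        rw [hd2] at hB
        rw [h3g] at hB
        omega
    · -- k = 18n + 3, M = 6n + 1
      have hgA : Nat.gcd k (6 * n + 1) = 6 * n + 1 := Nat.gcd_eq_right ⟨3, by omega⟩
      have hgB : Nat.gcd k (6 * n - 1) = 1 := by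
        apply gcd_helper (s := 6)
        · have hx : Nat.gcd k (6 * n - 1) ∣ 3 * (6 * n - 1) :=
            Dvd.dvd.mul_left (Nat.gcd_dvd_right _ _) 3
          have hy : Nat.gcd k (6 * n - 1) ∣ k := Nat.gcd_dvd_left _ _
          have := Nat.dvd_sub hy hx
          rwa [show k - 3 * (6 * n - 1) = 6 by omega] at this
        · rw [Nat.gcd_rec, show (6 * n - 1) % 6 = 5 by omega]
          norm_num
      rw [hgA, hgB] at hE
      have hsum : d1 + d2 = (6 * n + 1) + 1 := by omega
      have hNT := NT (M := 6 * n + 1) (by omega) (by omega)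
        (by rintro ⟨t, ht⟩; omega)
        (by rw [show 3 * (6 * n + 1) = k by omega]; exact Nat.gcd_dvd_left _ _)
        (by rw [show 3 * (6 * n + 1) = k by omega]; exact Nat.gcd_dvd_left _ _)
        hco hsum
      rcases hNT with ⟨hA, hB⟩ | ⟨hA, hB⟩
      · -- d2 = M : (6n+1) ∣ b' - 1, forces b' = 6n + 2, then d1 = 3 * gcd ≠ 1
        have hdd : (6 * n + 1) ∣ (b' - 1) := by
          rw [← hB]
          exact Nat.gcd_dvd_right _ _
        obtain ⟨t, htt⟩ := hdd
        have ht1 : t = 1 := by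
          rcases Nat.lt_or_ge t 1 with h0 | h0
          · exfalso
            have ht0 : t = 0 := by omega
            rw [ht0, Nat.mul_zero] at htt
            omega
          rcases Nat.lt_or_ge t 2 with h | h
          · omega
          · exfalso
            have hmul : (6 * n + 1) * 2 ≤ (6 * n + 1) * t := Nat.mul_le_mul_left _ h
            omega
        rw [ht1, Nat.mul_one] at htt
        have hb'val : b' = 6 * n + 2 := by omega
        have h3g : Nat.gcd k (b' + 1) = 3 * Nat.gcd (6 * n + 1) (2 * n + 1) := by
          rw [show k = 3 * (6 * n + 1) by omega, show b' + 1 = 3 * (2 * n + 1) by omega]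
          exact Nat.gcd_mul_left 3 _ _
        rw [hd1] at hA
        rw [h3g] at hA
        omega
      · -- d1 = M : (6n+1) ∣ b' + 1, forces b' = 6n, contradiction
        have hdd : (6 * n + 1) ∣ (b' + 1) := by
          rw [← hA]
          exact Nat.gcd_dvd_right _ _
        obtain ⟨t, htt⟩ := hdd
        have ht1 : t = 1 := by
          rcases Nat.lt_or_ge t 1 with h0 | h0
          · exfalso
            have ht0 : t = 0 := by omega
            rw [ht0, Nat.mul_zero] at htt
            omega
          rcases Nat.lt_or_ge t 2 with h | h
          · omega
          · exfalso
            have hmul : (6 * n + 1) * 2 ≤ (6 * n + 1) * t := Nat.mul_le_mul_left _ h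
            omega
        rw [ht1, Nat.mul_one] at htt
        omega

end Final


theorem stmt14 (n : ℕ) (hn : 1 ≤ n) (k : ℕ) (hk : k = 18 * n - 3 ∨ k = 18 * n + 3)
    (b' : ℕ) (hb'1 : 1 ≤ b') (hb'2 : 2 * b' ≤ k) (hb'ne : b' ≠ 6 * n) :
    IsEmpty
      ((circulantGraph ({1, -1, (6 * n : ZMod k), -(6 * n : ZMod k)} : Set (ZMod k))) ≃g
        (circulantGraph ({1, -1, (b' : ZMod k), -(b' : ZMod k)} : Set (ZMod k)))) := stmt14' n hn k hk b' hb'1 hb'2 hb'ne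
end

section
/- The circulant graph C_{18n±3}(1, 6n) is not edge-transitive for any positive integer n. -/
open SimpleGraph Finset

/-- Two edges are *opposite* if they occur as opposite sides of a 4-cycle. -/
private def OppEdge {V : Type*} (G : SimpleGraph V) (e e' : Sym2 V) : Prop :=
  ∃ a b c d : V, e = s(a, b) ∧ e' = s(c, d) ∧
    G.Adj a b ∧ G.Adj b c ∧ G.Adj c d ∧ G.Adj d a ∧ a ≠ c ∧ b ≠ d

private lemma oppEdge_map {V W : Type*} {G : SimpleGraph V} {H : SimpleGraph W} (φ : G ≃g H)
    {e e' : Sym2 V} (h : OppEdge G e e') :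
    OppEdge H (Sym2.map ⇑φ e) (Sym2.map ⇑φ e') := by
  obtain ⟨a, b, c, d, he, he', h1, h2, h3, h4, h5, h6⟩ := h
  refine ⟨φ a, φ b, φ c, φ d, ?_, ?_, ?_, ?_, ?_, ?_, ?_, ?_⟩
  · rw [he, Sym2.map_pair_eq]
  · rw [he', Sym2.map_pair_eq]
  · exact φ.map_adj_iff.mpr h1
  · exact φ.map_adj_iff.mpr h2
  · exact φ.map_adj_iff.mpr h3
  · exact φ.map_adj_iff.mpr h4
  · exact fun hh => h5 (φ.injective hh)
  · exact fun hh => h6 (φ.injective hh)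

private lemma aux_not_dvd (k : ℕ) (m : ℤ) (h0 : m ≠ 0) (hm : m.natAbs < 2 * k)
    (hk : m.natAbs ≠ k) : ¬ ((k : ℤ) ∣ m) := by
  intro h
  have h' : k ∣ m.natAbs := by
    have := Int.natAbs_dvd_natAbs.mpr h
    simpa using this
  have h1 : k ≤ m.natAbs := Nat.le_of_dvd (by omega) h'
  have h2 : k ∣ m.natAbs - k := Nat.dvd_sub h' dvd_rfl
  by_cases hz : m.natAbs - k = 0
  · omega
  · have := Nat.le_of_dvd (by omega) h2
    omega

private lemma aux_no_rel {n k : ℕ} (hn : 1 ≤ n) (hk : k = 18 * n - 3 ∨ k = 18 * n + 3)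
    (c₁ c₂ : ℤ) (h1 : -4 ≤ c₁ ∧ c₁ ≤ 4) (h2 : -3 ≤ c₂ ∧ c₂ ≤ 3)
    (h3 : ¬(c₁ = 0 ∧ c₂ = 0))
    (h4 : ¬((c₁ = 3 ∨ c₁ = -3) ∧ (c₂ ≤ -2 ∨ 2 ≤ c₂))) :
    (c₁ : ZMod k) + (c₂ : ZMod k) * (6 * n : ZMod k) ≠ 0 := by
  intro h
  have h' : ((c₁ + c₂ * (6 * (n : ℤ)) : ℤ) : ZMod k) = ((0 : ℤ) : ZMod k) := by
    push_cast
    linear_combination h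
  rw [ZMod.intCast_eq_intCast_iff] at h'
  have hd : (k : ℤ) ∣ c₁ + c₂ * (6 * (n : ℤ)) := by
    have hd0 := h'.dvd
    rw [zero_sub] at hd0
    exact dvd_neg.mp hd0
  obtain ⟨h2a, h2b⟩ := h2
  interval_cases c₂ <;>
    exact aux_not_dvd k _ (by omega) (by omega) (by omega) hd

private lemma aux_adj_ex {n k : ℕ} {u v : ZMod k}
    (h : (circulantGraph ({1, -1, (6 * n : ZMod k), -(6 * n : ZMod k)} : Set (ZMod k))).Adj u v) :
    ∃ s : ZMod k, (s = 1 ∨ s = -1 ∨ s = 6 * n ∨ s = -(6 * n)) ∧ v = u + s := by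
  rw [circulantGraph_adj] at h
  obtain ⟨hne, h | h⟩ := h
  · simp only [Set.mem_insert_iff, Set.mem_singleton_iff] at h
    rcases h with h | h | h | h
    · exact ⟨-1, by tauto, by linear_combination -h⟩
    · exact ⟨1, by tauto, by linear_combination -h⟩
    · exact ⟨-(6 * n), by tauto, by linear_combination -h⟩
    · exact ⟨6 * n, by tauto, by linear_combination -h⟩
  · simp only [Set.mem_insert_iff, Set.mem_singleton_iff] at h
    rcases h with h | h | h | h
    · exact ⟨1, by tauto, by linear_combination h⟩
    · exact ⟨-1, by tauto, by linear_combination h⟩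
    · exact ⟨6 * n, by tauto, by linear_combination h⟩
    · exact ⟨-(6 * n), by tauto, by linear_combination h⟩

private lemma aux_adj_mk {n k : ℕ} (hn : 1 ≤ n) (hk : k = 18 * n - 3 ∨ k = 18 * n + 3)
    (u v s : ZMod k) (hs : s = 1 ∨ s = -1 ∨ s = 6 * n ∨ s = -(6 * n)) (hv : v = u + s) :
    (circulantGraph ({1, -1, (6 * n : ZMod k), -(6 * n : ZMod k)} : Set (ZMod k))).Adj u v := by
  haveI : Fact (1 < k) := ⟨by omega⟩
  subst hv
  rw [circulantGraph_adj]
  refine ⟨?_, Or.inr ?_⟩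
  · intro hEq
    have hs0 : s = 0 := by linear_combination -hEq
    rcases hs with rfl | rfl | rfl | rfl
    · exact one_ne_zero hs0
    · exact one_ne_zero (by linear_combination -hs0)
    · exact aux_no_rel hn hk 0 1 (by decide) (by decide) (by decide) (by decide)
        (by push_cast; linear_combination hs0)
    · exact aux_no_rel hn hk 0 (-1) (by decide) (by decide) (by decide) (by decide)
        (by push_cast; linear_combination hs0)
  · have hss : u + s - u = s := by ring
    rw [hss]
    simp only [Set.mem_insert_iff, Set.mem_singleton_iff]
    tauto

private lemma aux_classify {n k : ℕ} (hn : 1 ≤ n) (hk : k = 18 * n - 3 ∨ k = 18 * n + 3)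
    (x : ZMod k) (g : Sym2 (ZMod k))
    (h : OppEdge (circulantGraph ({1, -1, (6 * n : ZMod k), -(6 * n : ZMod k)} : Set (ZMod k)))
      s(x, x + 1) g) :
    g = s(x + 6 * n, x + 6 * n + 1) ∨ g = s(x - 6 * n, x - 6 * n + 1) := by
  obtain ⟨a, b', c, d, he, he', hab, hbc, hcd, hda, hac, hbd⟩ := h
  rw [Sym2.eq_iff] at he
  rcases he with ⟨rfl, rfl⟩ | ⟨rfl, rfl⟩
  · obtain ⟨s₁, hs1, hc⟩ := aux_adj_ex hbc
    obtain ⟨s₃, hs3, hdc⟩ := aux_adj_ex hcd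
    obtain ⟨s₂, hs2, hxd⟩ := aux_adj_ex hda
    rcases hs1 with rfl | rfl | rfl | rfl
    · rcases hs2 with rfl | rfl | rfl | rfl
      · rcases hs3 with rfl | rfl | rfl | rfl
        · exact (aux_no_rel hn hk (4) (0) (by decide) (by decide) (by decide)
            (by decide) (by push_cast; linear_combination -hxd - hdc - hc)).elim
        · exact (aux_no_rel hn hk (2) (0) (by decide) (by decide) (by decide)
            (by decide) (by push_cast; linear_combination -hxd - hdc - hc)).elim
        · exact (aux_no_rel hn hk (3) (1) (by decide) (by decide) (by decide)
            (by decide) (by push_cast; linear_combination -hxd - hdc - hc)).elim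
        · exact (aux_no_rel hn hk (3) (-1) (by decide) (by decide) (by decide)
            (by decide) (by push_cast; linear_combination -hxd - hdc - hc)).elim
      · exact (hbd (by linear_combination hxd)).elim
      · rcases hs3 with rfl | rfl | rfl | rfl
        · exact (aux_no_rel hn hk (3) (1) (by decide) (by decide) (by decide)
            (by decide) (by push_cast; linear_combination -hxd - hdc - hc)).elim
        · exact (aux_no_rel hn hk (1) (1) (by decide) (by decide) (by decide)
            (by decide) (by push_cast; linear_combination -hxd - hdc - hc)).elim
        · exact (aux_no_rel hn hk (2) (2) (by decide) (by decide) (by decide)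
            (by decide) (by push_cast; linear_combination -hxd - hdc - hc)).elim
        · exact (aux_no_rel hn hk (2) (0) (by decide) (by decide) (by decide)
            (by decide) (by push_cast; linear_combination -hxd - hdc - hc)).elim
      · rcases hs3 with rfl | rfl | rfl | rfl
        · exact (aux_no_rel hn hk (3) (-1) (by decide) (by decide) (by decide)
            (by decide) (by push_cast; linear_combination -hxd - hdc - hc)).elim
        · exact (aux_no_rel hn hk (1) (-1) (by decide) (by decide) (by decide)
            (by decide) (by push_cast; linear_combination -hxd - hdc - hc)).elim
        · exact (aux_no_rel hn hk (2) (0) (by decide) (by decide) (by decide)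
            (by decide) (by push_cast; linear_combination -hxd - hdc - hc)).elim
        · exact (aux_no_rel hn hk (2) (-2) (by decide) (by decide) (by decide)
            (by decide) (by push_cast; linear_combination -hxd - hdc - hc)).elim
    · exact (hac (by linear_combination -hc)).elim
    · rcases hs2 with rfl | rfl | rfl | rfl
      · rcases hs3 with rfl | rfl | rfl | rfl
        · exact (aux_no_rel hn hk (3) (1) (by decide) (by decide) (by decide)
            (by decide) (by push_cast; linear_combination -hxd - hdc - hc)).elim
        · exact (aux_no_rel hn hk (1) (1) (by decide) (by decide) (by decide)
            (by decide) (by push_cast; linear_combination -hxd - hdc - hc)).elim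
        · exact (aux_no_rel hn hk (2) (2) (by decide) (by decide) (by decide)
            (by decide) (by push_cast; linear_combination -hxd - hdc - hc)).elim
        · exact (aux_no_rel hn hk (2) (0) (by decide) (by decide) (by decide)
            (by decide) (by push_cast; linear_combination -hxd - hdc - hc)).elim
      · exact (hbd (by linear_combination hxd)).elim
      · rcases hs3 with rfl | rfl | rfl | rfl
        · exact (aux_no_rel hn hk (2) (2) (by decide) (by decide) (by decide)
            (by decide) (by push_cast; linear_combination -hxd - hdc - hc)).elim
        · exact (aux_no_rel hn hk (0) (2) (by decide) (by decide) (by decide)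
            (by decide) (by push_cast; linear_combination -hxd - hdc - hc)).elim
        · exact (aux_no_rel hn hk (1) (3) (by decide) (by decide) (by decide)
            (by decide) (by push_cast; linear_combination -hxd - hdc - hc)).elim
        · exact (aux_no_rel hn hk (1) (1) (by decide) (by decide) (by decide)
            (by decide) (by push_cast; linear_combination -hxd - hdc - hc)).elim
      · left
        rw [he', Sym2.eq_iff]
        right
        exact ⟨by linear_combination hc, by linear_combination -hxd⟩
    · rcases hs2 with rfl | rfl | rfl | rfl
      · rcases hs3 with rfl | rfl | rfl | rfl
        · exact (aux_no_rel hn hk (3) (-1) (by decide) (by decide) (by decide)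
            (by decide) (by push_cast; linear_combination -hxd - hdc - hc)).elim
        · exact (aux_no_rel hn hk (1) (-1) (by decide) (by decide) (by decide)
            (by decide) (by push_cast; linear_combination -hxd - hdc - hc)).elim
        · exact (aux_no_rel hn hk (2) (0) (by decide) (by decide) (by decide)
            (by decide) (by push_cast; linear_combination -hxd - hdc - hc)).elim
        · exact (aux_no_rel hn hk (2) (-2) (by decide) (by decide) (by decide)
            (by decide) (by push_cast; linear_combination -hxd - hdc - hc)).elim
      · exact (hbd (by linear_combination hxd)).elim
      · right
        rw [he', Sym2.eq_iff]
        right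
        exact ⟨by linear_combination hc, by linear_combination -hxd⟩
      · rcases hs3 with rfl | rfl | rfl | rfl
        · exact (aux_no_rel hn hk (2) (-2) (by decide) (by decide) (by decide)
            (by decide) (by push_cast; linear_combination -hxd - hdc - hc)).elim
        · exact (aux_no_rel hn hk (0) (-2) (by decide) (by decide) (by decide)
            (by decide) (by push_cast; linear_combination -hxd - hdc - hc)).elim
        · exact (aux_no_rel hn hk (1) (-1) (by decide) (by decide) (by decide)
            (by decide) (by push_cast; linear_combination -hxd - hdc - hc)).elim
        · exact (aux_no_rel hn hk (1) (-3) (by decide) (by decide) (by decide)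
            (by decide) (by push_cast; linear_combination -hxd - hdc - hc)).elim
  · obtain ⟨s₁, hs1, hc⟩ := aux_adj_ex hbc
    obtain ⟨s₃, hs3, hdc⟩ := aux_adj_ex hcd
    obtain ⟨s₂, hs2, hxd⟩ := aux_adj_ex hda
    rcases hs1 with rfl | rfl | rfl | rfl
    · exact (hac (by linear_combination -hc)).elim
    · rcases hs2 with rfl | rfl | rfl | rfl
      · exact (hbd (by linear_combination hxd)).elim
      · rcases hs3 with rfl | rfl | rfl | rfl
        · exact (aux_no_rel hn hk (-2) (0) (by decide) (by decide) (by decide)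
            (by decide) (by push_cast; linear_combination -hxd - hdc - hc)).elim
        · exact (aux_no_rel hn hk (-4) (0) (by decide) (by decide) (by decide)
            (by decide) (by push_cast; linear_combination -hxd - hdc - hc)).elim
        · exact (aux_no_rel hn hk (-3) (1) (by decide) (by decide) (by decide)
            (by decide) (by push_cast; linear_combination -hxd - hdc - hc)).elim
        · exact (aux_no_rel hn hk (-3) (-1) (by decide) (by decide) (by decide)
            (by decide) (by push_cast; linear_combination -hxd - hdc - hc)).elim
      · rcases hs3 with rfl | rfl | rfl | rfl
        · exact (aux_no_rel hn hk (-1) (1) (by decide) (by decide) (by decide)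
            (by decide) (by push_cast; linear_combination -hxd - hdc - hc)).elim
        · exact (aux_no_rel hn hk (-3) (1) (by decide) (by decide) (by decide)
            (by decide) (by push_cast; linear_combination -hxd - hdc - hc)).elim
        · exact (aux_no_rel hn hk (-2) (2) (by decide) (by decide) (by decide)
            (by decide) (by push_cast; linear_combination -hxd - hdc - hc)).elim
        · exact (aux_no_rel hn hk (-2) (0) (by decide) (by decide) (by decide)
            (by decide) (by push_cast; linear_combination -hxd - hdc - hc)).elim
      · rcases hs3 with rfl | rfl | rfl | rfl
        · exact (aux_no_rel hn hk (-1) (-1) (by decide) (by decide) (by decide)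
            (by decide) (by push_cast; linear_combination -hxd - hdc - hc)).elim
        · exact (aux_no_rel hn hk (-3) (-1) (by decide) (by decide) (by decide)
            (by decide) (by push_cast; linear_combination -hxd - hdc - hc)).elim
        · exact (aux_no_rel hn hk (-2) (0) (by decide) (by decide) (by decide)
            (by decide) (by push_cast; linear_combination -hxd - hdc - hc)).elim
        · exact (aux_no_rel hn hk (-2) (-2) (by decide) (by decide) (by decide)
            (by decide) (by push_cast; linear_combination -hxd - hdc - hc)).elim
    · rcases hs2 with rfl | rfl | rfl | rfl
      · exact (hbd (by linear_combination hxd)).elim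
      · rcases hs3 with rfl | rfl | rfl | rfl
        · exact (aux_no_rel hn hk (-1) (1) (by decide) (by decide) (by decide)
            (by decide) (by push_cast; linear_combination -hxd - hdc - hc)).elim
        · exact (aux_no_rel hn hk (-3) (1) (by decide) (by decide) (by decide)
            (by decide) (by push_cast; linear_combination -hxd - hdc - hc)).elim
        · exact (aux_no_rel hn hk (-2) (2) (by decide) (by decide) (by decide)
            (by decide) (by push_cast; linear_combination -hxd - hdc - hc)).elim
        · exact (aux_no_rel hn hk (-2) (0) (by decide) (by decide) (by decide)
            (by decide) (by push_cast; linear_combination -hxd - hdc - hc)).elim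
      · rcases hs3 with rfl | rfl | rfl | rfl
        · exact (aux_no_rel hn hk (0) (2) (by decide) (by decide) (by decide)
            (by decide) (by push_cast; linear_combination -hxd - hdc - hc)).elim
        · exact (aux_no_rel hn hk (-2) (2) (by decide) (by decide) (by decide)
            (by decide) (by push_cast; linear_combination -hxd - hdc - hc)).elim
        · exact (aux_no_rel hn hk (-1) (3) (by decide) (by decide) (by decide)
            (by decide) (by push_cast; linear_combination -hxd - hdc - hc)).elim
        · exact (aux_no_rel hn hk (-1) (1) (by decide) (by decide) (by decide)
            (by decide) (by push_cast; linear_combination -hxd - hdc - hc)).elim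
      · left
        rw [he', Sym2.eq_iff]
        left
        exact ⟨by linear_combination hc, by linear_combination -hxd⟩
    · rcases hs2 with rfl | rfl | rfl | rfl
      · exact (hbd (by linear_combination hxd)).elim
      · rcases hs3 with rfl | rfl | rfl | rfl
        · exact (aux_no_rel hn hk (-1) (-1) (by decide) (by decide) (by decide)
            (by decide) (by push_cast; linear_combination -hxd - hdc - hc)).elim
        · exact (aux_no_rel hn hk (-3) (-1) (by decide) (by decide) (by decide)
            (by decide) (by push_cast; linear_combination -hxd - hdc - hc)).elim
        · exact (aux_no_rel hn hk (-2) (0) (by decide) (by decide) (by decide)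
            (by decide) (by push_cast; linear_combination -hxd - hdc - hc)).elim
        · exact (aux_no_rel hn hk (-2) (-2) (by decide) (by decide) (by decide)
            (by decide) (by push_cast; linear_combination -hxd - hdc - hc)).elim
      · right
        rw [he', Sym2.eq_iff]
        left
        exact ⟨by linear_combination hc, by linear_combination -hxd⟩
      · rcases hs3 with rfl | rfl | rfl | rfl
        · exact (aux_no_rel hn hk (0) (-2) (by decide) (by decide) (by decide)
            (by decide) (by push_cast; linear_combination -hxd - hdc - hc)).elim
        · exact (aux_no_rel hn hk (-2) (-2) (by decide) (by decide) (by decide)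
            (by decide) (by push_cast; linear_combination -hxd - hdc - hc)).elim
        · exact (aux_no_rel hn hk (-1) (-1) (by decide) (by decide) (by decide)
            (by decide) (by push_cast; linear_combination -hxd - hdc - hc)).elim
        · exact (aux_no_rel hn hk (-1) (-3) (by decide) (by decide) (by decide)
            (by decide) (by push_cast; linear_combination -hxd - hdc - hc)).elim

private lemma aux_step {n k : ℕ} (hn : 1 ≤ n) (hk : k = 18 * n - 3 ∨ k = 18 * n + 3)
    (y : ZMod k) :
    OppEdge (circulantGraph ({1, -1, (6 * n : ZMod k), -(6 * n : ZMod k)} : Set (ZMod k)))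
      s(y, y + 6 * n) s(y + 1, y + 1 + 6 * n) := by
  refine ⟨y, y + 6 * n, y + 6 * n + 1, y + 1, rfl, ?_, ?_, ?_, ?_, ?_, ?_, ?_⟩
  · rw [Sym2.eq_iff]
    right
    exact ⟨rfl, by ring⟩
  · exact aux_adj_mk hn hk _ _ (6 * n) (by tauto) rfl
  · exact aux_adj_mk hn hk _ _ 1 (by tauto) rfl
  · exact aux_adj_mk hn hk _ _ (-(6 * n)) (by tauto) (by ring)
  · exact aux_adj_mk hn hk _ _ (-1) (by tauto) (by ring)
  · intro hEq
    exact aux_no_rel hn hk 1 1 (by decide) (by decide) (by decide) (by decide)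
      (by push_cast; linear_combination -hEq)
  · intro hEq
    exact aux_no_rel hn hk (-1) 1 (by decide) (by decide) (by decide) (by decide)
      (by push_cast; linear_combination hEq)

private lemma aux_chain {n k : ℕ} (hn : 1 ≤ n) (hk : k = 18 * n - 3 ∨ k = 18 * n + 3)
    (m : ℕ) :
    Relation.ReflTransGen
      (OppEdge (circulantGraph ({1, -1, (6 * n : ZMod k), -(6 * n : ZMod k)} : Set (ZMod k))))
      s((0 : ZMod k), (6 * n : ZMod k)) s((m : ZMod k), (m : ZMod k) + 6 * n) := by
  induction m with
  | zero =>
      simp only [Nat.cast_zero, zero_add]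
      exact Relation.ReflTransGen.refl
  | succ m ih =>
      refine ih.tail ?_
      have hcast : ((m + 1 : ℕ) : ZMod k) = (m : ZMod k) + 1 := by push_cast; ring
      rw [hcast]
      exact aux_step hn hk (m : ZMod k)

theorem stmt15 (n : ℕ) (hn : 1 ≤ n) (k : ℕ) (hk : k = 18 * n - 3 ∨ k = 18 * n + 3) :
    ¬ (∀ e₁ ∈ (circulantGraph ({1, -1, (6 * n : ZMod k), -(6 * n : ZMod k)} :
          Set (ZMod k))).edgeSet,
       ∀ e₂ ∈ (circulantGraph ({1, -1, (6 * n : ZMod k), -(6 * n : ZMod k)} :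
          Set (ZMod k))).edgeSet,
       ∃ φ : (circulantGraph ({1, -1, (6 * n : ZMod k), -(6 * n : ZMod k)} : Set (ZMod k))) ≃g
             (circulantGraph ({1, -1, (6 * n : ZMod k), -(6 * n : ZMod k)} : Set (ZMod k))),
         Sym2.map φ e₁ = e₂) := by
  intro H
  haveI : NeZero k := ⟨by omega⟩
  haveI : Fact (1 < k) := ⟨by omega⟩
  set G := circulantGraph ({1, -1, (6 * n : ZMod k), -(6 * n : ZMod k)} : Set (ZMod k)) with hG
  have he1 : s((0 : ZMod k), (1 : ZMod k)) ∈ G.edgeSet := by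
    rw [SimpleGraph.mem_edgeSet]
    exact aux_adj_mk hn hk 0 1 1 (by tauto) (by ring)
  have he2 : s((0 : ZMod k), (6 * n : ZMod k)) ∈ G.edgeSet := by
    rw [SimpleGraph.mem_edgeSet]
    exact aux_adj_mk hn hk 0 (6 * n) (6 * n) (by tauto) (by ring)
  obtain ⟨φ, hφ⟩ := H _ he1 _ he2
  set C1 : Set (Sym2 (ZMod k)) :=
    {e | Relation.ReflTransGen (OppEdge G) s((0 : ZMod k), (1 : ZMod k)) e} with hC1
  set C2 : Set (Sym2 (ZMod k)) :=
    {e | Relation.ReflTransGen (OppEdge G) s((0 : ZMod k), (6 * n : ZMod k)) e} with hC2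
  have hcomp1 : ∀ z : Sym2 (ZMod k), Sym2.map ⇑φ (Sym2.map ⇑φ.symm z) = z := by
    intro z
    rw [Sym2.map_map]
    have hfun : (⇑φ ∘ ⇑φ.symm) = id := by
      funext w
      exact φ.apply_symm_apply w
    rw [hfun, Sym2.map_id]
    rfl
  have hcomp2 : ∀ z : Sym2 (ZMod k), Sym2.map ⇑φ.symm (Sym2.map ⇑φ z) = z := by
    intro z
    rw [Sym2.map_map]
    have hfun : (⇑φ.symm ∘ ⇑φ) = id := by
      funext w
      exact φ.symm_apply_apply w
    rw [hfun, Sym2.map_id]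
    rfl
  have hsub1 : C2 ⊆ Sym2.map ⇑φ '' C1 := by
    intro e he
    have he' : Relation.ReflTransGen (OppEdge G) s((0 : ZMod k), (6 * n : ZMod k)) e := he
    clear he
    induction he' with
    | refl => exact ⟨s((0 : ZMod k), (1 : ZMod k)), Relation.ReflTransGen.refl, hφ⟩
    | tail hab hbc ih =>
        obtain ⟨e', he'1, he'2⟩ := ih
        refine ⟨Sym2.map ⇑φ.symm _, Relation.ReflTransGen.tail he'1 ?_, hcomp1 _⟩
        have hthis := oppEdge_map φ.symm hbc
        rw [← he'2, hcomp2] at hthis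
        exact hthis
  have hsub2 : (fun y : ZMod k => s(y, y + 6 * n)) '' Set.univ ⊆ C2 := by
    rintro e ⟨y, -, rfl⟩
    have h := aux_chain hn hk (y.val)
    have hy : ((y.val : ℕ) : ZMod k) = y := ZMod.natCast_rightInverse y
    rw [hy] at h
    exact h
  have h3dvd : (3 : ℕ) ∣ k := by omega
  set f := ZMod.castHom h3dvd (ZMod 3) with hf
  set Mset : Set (ZMod k) := {x : ZMod k | f x = 0} with hM
  have hfb : f (6 * n : ZMod k) = 0 := by
    have hcast : ((6 * n : ℕ) : ZMod k) = (6 * n : ZMod k) := by push_cast; ring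
    rw [← hcast, map_natCast]
    rw [ZMod.natCast_eq_zero_iff]
    omega
  have hsub3 : C1 ⊆ (fun x : ZMod k => s(x, x + 1)) '' Mset := by
    intro e he
    have he' : Relation.ReflTransGen (OppEdge G) s((0 : ZMod k), (1 : ZMod k)) e := he
    clear he
    induction he' with
    | refl =>
        refine ⟨0, ?_, ?_⟩
        · show f 0 = 0
          exact map_zero f
        · show s((0 : ZMod k), (0 : ZMod k) + 1) = s((0 : ZMod k), (1 : ZMod k))
          rw [zero_add]
    | tail hab hbc ih =>
        obtain ⟨x, hx, hxe⟩ := ih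
        rw [← hxe] at hbc
        rcases aux_classify hn hk x _ hbc with hcl | hcl
        · refine ⟨x + 6 * n, ?_, hcl.symm⟩
          show f (x + 6 * n) = 0
          rw [map_add, hfb, add_zero]
          exact hx
        · refine ⟨x - 6 * n, ?_, hcl.symm⟩
          show f (x - 6 * n) = 0
          rw [map_sub, hfb, sub_zero]
          exact hx
  have hcard1 : C2.ncard ≤ C1.ncard := by
    calc C2.ncard ≤ (Sym2.map ⇑φ '' C1).ncard := Set.ncard_le_ncard hsub1 (Set.toFinite _)
    _ ≤ C1.ncard := Set.ncard_image_le (Set.toFinite _)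
  have hinj : Function.Injective (fun y : ZMod k => s(y, y + 6 * n)) := by
    intro y y' hyy
    simp only [Sym2.eq_iff] at hyy
    rcases hyy with ⟨h1, -⟩ | ⟨ha, hb⟩
    · exact h1
    · exact absurd (by push_cast; linear_combination hb - ha)
        (aux_no_rel hn hk 0 2 (by decide) (by decide) (by decide) (by decide))
  have hcard2 : k ≤ C2.ncard := by
    calc (k : ℕ) = Nat.card (ZMod k) := (Nat.card_zmod k).symm
    _ = (Set.univ : Set (ZMod k)).ncard := (Set.ncard_univ _).symm
    _ = ((fun y : ZMod k => s(y, y + 6 * n)) '' Set.univ).ncard :=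
        (Set.ncard_image_of_injective _ hinj).symm
    _ ≤ C2.ncard := Set.ncard_le_ncard hsub2 (Set.toFinite _)
  have hcard3 : C1.ncard ≤ Mset.ncard := by
    calc C1.ncard ≤ ((fun x : ZMod k => s(x, x + 1)) '' Mset).ncard :=
        Set.ncard_le_ncard hsub3 (Set.toFinite _)
    _ ≤ Mset.ncard := Set.ncard_image_le (Set.toFinite _)
  have hcard4 : Mset.ncard < k := by
    have hne : Mset ≠ Set.univ := by
      intro hEq
      have h2' : (2 : ZMod k) ∈ Mset := hEq ▸ Set.mem_univ _
      have hf2 : f (2 : ZMod k) = 0 := h2'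
      rw [map_ofNat] at hf2
      exact absurd hf2 (by decide)
    have hss : Mset ⊂ Set.univ := Set.ssubset_univ_iff.mpr hne
    calc Mset.ncard < (Set.univ : Set (ZMod k)).ncard := Set.ncard_lt_ncard hss (Set.toFinite _)
    _ = k := by rw [Set.ncard_univ, Nat.card_zmod]
  omega
end

section
/- Every edge of the circulant graph C_{15}(1,6) has edge betweenness centrality equal to 13; hence C_{15}(1,6) is edge-betweenness-uniform. -/
open SimpleGraph Finset

/-! ### Auxiliary material -/

section IsoInvariance

variable {V : Type*} {G : SimpleGraph V} (φ : G ≃g G)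

/-- Walks transport along a graph automorphism. -/
def EB.walkEquiv (x y : V) : G.Walk x y ≃ G.Walk (φ x) (φ y) where
  toFun p := p.map φ.toHom
  invFun q := (q.map φ.symm.toHom).copy (φ.symm_apply_apply x) (φ.symm_apply_apply y)
  left_inv p := by
    have h : (φ.symm.toHom.comp φ.toHom : G →g G) = Hom.id := by
      ext v; simp
    dsimp only
    rw [SimpleGraph.Walk.map_map, SimpleGraph.Walk.map_eq_of_eq _ _ h]
    apply SimpleGraph.Walk.ext_support
    simp
    exact SimpleGraph.Walk.support_copy _ _ _
  right_inv q := by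
    have h : (φ.toHom.comp φ.symm.toHom : G →g G) = Hom.id := by
      ext v; simp
    dsimp only
    rw [SimpleGraph.Walk.map_copy, SimpleGraph.Walk.map_map,
      SimpleGraph.Walk.map_eq_of_eq _ _ h]
    apply SimpleGraph.Walk.ext_support
    simp
    exact SimpleGraph.Walk.support_copy _ _ _

lemma EB.dist_map_le (x y : V) : G.dist (φ x) (φ y) ≤ G.dist x y := by
  by_cases h : G.Reachable x y
  · obtain ⟨p, hp⟩ := h.exists_walk_length_eq_dist
    calc G.dist (φ x) (φ y) ≤ (p.map φ.toHom).length := SimpleGraph.dist_le _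
      _ = G.dist x y := by rw [SimpleGraph.Walk.length_map, hp]
  · have h2 : ¬ G.Reachable (φ x) (φ y) := by
      intro ⟨q⟩
      exact h ⟨(q.map φ.symm.toHom).copy (φ.symm_apply_apply x) (φ.symm_apply_apply y)⟩
    rw [SimpleGraph.dist_eq_zero_of_not_reachable h,
      SimpleGraph.dist_eq_zero_of_not_reachable h2]

lemma EB.dist_map (x y : V) : G.dist (φ x) (φ y) = G.dist x y := by
  refine le_antisymm (EB.dist_map_le φ x y) ?_
  have := EB.dist_map_le φ.symm (φ x) (φ y)
  simpa using this

lemma EB.nsp_map (x y : V) :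
    numShortestPaths G (φ x) (φ y) = numShortestPaths G x y := by
  refine Nat.card_congr (Equiv.subtypeEquiv (EB.walkEquiv φ x y) fun p => ?_).symm
  rw [EB.dist_map]
  simp [EB.walkEquiv]

lemma EB.nspt_map (x y : V) (e : Sym2 V) :
    numShortestPathsThru G (φ x) (φ y) (Sym2.map φ e) = numShortestPathsThru G x y e := by
  refine Nat.card_congr (Equiv.subtypeEquiv (EB.walkEquiv φ x y) fun p => ?_).symm
  rw [EB.dist_map]
  simp only [EB.walkEquiv, Equiv.coe_fn_mk, SimpleGraph.Walk.length_map,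
    SimpleGraph.Walk.edges_map, List.mem_map]
  constructor
  · rintro ⟨h1, h2⟩
    exact ⟨h1, ⟨e, h2, rfl⟩⟩
  · rintro ⟨h1, e', he', heq⟩
    have : e' = e := Sym2.map.injective φ.injective heq
    exact ⟨h1, this ▸ he'⟩

lemma EB.betweenness_map {V : Type*} [Fintype V] {G : SimpleGraph V} (φ : G ≃g G)
    (e : Sym2 V) :
    edgeBetweenness G (Sym2.map φ e) = edgeBetweenness G e := by
  classical
  unfold edgeBetweenness
  rw [← Equiv.sum_comp φ.toEquiv (fun x => ∑ y : V, if x = y then 0 else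
    (numShortestPathsThru G x y (Sym2.map φ e) : ℚ) / (numShortestPaths G x y))]
  refine Finset.sum_congr rfl fun x _ => ?_
  rw [← Equiv.sum_comp φ.toEquiv]
  refine Finset.sum_congr rfl fun y _ => ?_
  simp only [RelIso.coe_fn_toEquiv]
  have hxy : (φ x = φ y) ↔ (x = y) := φ.toEquiv.apply_eq_iff_eq
  by_cases h : x = y
  · simp [h]
  · rw [if_neg (fun hc => h (hxy.mp hc)), if_neg h, EB.nsp_map, EB.nspt_map]

end IsoInvariance

/-! ### The concrete graph -/

def EB.s15 : Set (ZMod 15) := {1, -1, 6, -6}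

instance : DecidablePred (· ∈ EB.s15) := fun x =>
  decidable_of_iff (x = 1 ∨ x = -1 ∨ x = 6 ∨ x = -6) (by simp [EB.s15])

abbrev EB.G15 : SimpleGraph (ZMod 15) := circulantGraph EB.s15

/-- Distances from `0` in `C₁₅(1,6)`. -/
def EB.D (x : ZMod 15) : ℕ :=
  if x = 0 then 0
  else if x = 1 ∨ x = 6 ∨ x = 9 ∨ x = 14 then 1
  else if x = 4 ∨ x = 11 then 3
  else 2

set_option maxRecDepth 100000 in
set_option maxHeartbeats 4000000 in
lemma EB.key1 : ∀ x y : ZMod 15, (EB.G15.finsetWalkLength (EB.D (y - x)) x y).Nonempty := by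
  decide

set_option maxRecDepth 100000 in
set_option maxHeartbeats 4000000 in
lemma EB.key2 : ∀ x y : ZMod 15, ∀ k, k < EB.D (y - x) →
    EB.G15.finsetWalkLength k x y = ∅ := by
  decide

lemma EB.dist_eq (x y : ZMod 15) : EB.G15.dist x y = EB.D (y - x) := by
  obtain ⟨p, hp⟩ := EB.key1 x y
  have hpl : p.length = EB.D (y - x) := SimpleGraph.mem_finsetWalkLength_iff.mp hp
  have hle : EB.G15.dist x y ≤ EB.D (y - x) := hpl ▸ SimpleGraph.dist_le p
  rcases lt_or_eq_of_le hle with h | h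
  · exfalso
    have hr : EB.G15.Reachable x y := ⟨p⟩
    obtain ⟨q, hq⟩ := hr.exists_walk_length_eq_dist
    have hq' : q ∈ EB.G15.finsetWalkLength (EB.G15.dist x y) x y :=
      SimpleGraph.mem_finsetWalkLength_iff.mpr hq
    rw [EB.key2 x y _ h] at hq'
    exact absurd hq' (Finset.notMem_empty q)
  · exact h

lemma EB.nsp_eq (x y : ZMod 15) :
    numShortestPaths EB.G15 x y = (EB.G15.finsetWalkLength (EB.D (y - x)) x y).card := by
  unfold numShortestPaths
  rw [EB.dist_eq]
  have e1 : {p : EB.G15.Walk x y // p.length = EB.D (y - x)} ≃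
      {p : EB.G15.Walk x y // p ∈ EB.G15.finsetWalkLength (EB.D (y - x)) x y} :=
    Equiv.subtypeEquivRight fun p => (SimpleGraph.mem_finsetWalkLength_iff).symm
  rw [Nat.card_congr e1, Nat.card_eq_fintype_card, Fintype.card_coe]

lemma EB.nspt_eq (x y : ZMod 15) (e : Sym2 (ZMod 15)) :
    numShortestPathsThru EB.G15 x y e =
      ((EB.G15.finsetWalkLength (EB.D (y - x)) x y).filter (fun p => e ∈ p.edges)).card := by
  classical
  unfold numShortestPathsThru
  rw [EB.dist_eq]
  have e1 : {p : EB.G15.Walk x y // p.length = EB.D (y - x) ∧ e ∈ p.edges} ≃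
      {p : EB.G15.Walk x y //
        p ∈ (EB.G15.finsetWalkLength (EB.D (y - x)) x y).filter (fun p => e ∈ p.edges)} :=
    Equiv.subtypeEquivRight fun p => by
      rw [Finset.mem_filter, SimpleGraph.mem_finsetWalkLength_iff]
  rw [Nat.card_congr e1, Nat.card_eq_fintype_card, Fintype.card_coe]

/-- Computable version of the betweenness of an edge. -/
def EB.num (x y : ZMod 15) (e : Sym2 (ZMod 15)) : ℕ :=
  ((EB.G15.finsetWalkLength (EB.D (y - x)) x y).filter (fun p => e ∈ p.edges)).card

def EB.den (x y : ZMod 15) : ℕ := (EB.G15.finsetWalkLength (EB.D (y - x)) x y).card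

def EB.B (e : Sym2 (ZMod 15)) : ℚ :=
  ∑ x : ZMod 15, ∑ y : ZMod 15, if x = y then 0 else
    (EB.num x y e : ℚ) / (EB.den x y : ℚ)

lemma EB.betweenness_eq (e : Sym2 (ZMod 15)) : edgeBetweenness EB.G15 e = EB.B e := by
  classical
  unfold edgeBetweenness EB.B
  refine Finset.sum_congr rfl fun x _ => Finset.sum_congr rfl fun y _ => ?_
  by_cases h : x = y
  · simp [h]
  · rw [if_neg h, if_neg h, EB.nsp_eq, EB.nspt_eq]
    rfl

/-- Six times the betweenness, as a natural number sum. -/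
def EB.S (e : Sym2 (ZMod 15)) : ℕ :=
  ∑ x : ZMod 15, ∑ y : ZMod 15, if x = y then 0 else EB.num x y e * (6 / EB.den x y)

set_option maxRecDepth 100000 in
set_option maxHeartbeats 12000000 in
lemma EB.den_dvd : ∀ x y : ZMod 15, EB.den x y ∣ 6 := by decide

lemma EB.den_pos (x y : ZMod 15) : 0 < EB.den x y :=
  Finset.card_pos.mpr (EB.key1 x y)

lemma EB.B_eq_S (e : Sym2 (ZMod 15)) : EB.B e = (EB.S e : ℚ) / 6 := by
  rw [eq_div_iff (by norm_num : (6 : ℚ) ≠ 0)]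
  unfold EB.B EB.S
  rw [Finset.sum_mul, Nat.cast_sum]
  refine Finset.sum_congr rfl fun x _ => ?_
  rw [Finset.sum_mul, Nat.cast_sum]
  refine Finset.sum_congr rfl fun y _ => ?_
  by_cases h : x = y
  · simp [h]
  · rw [if_neg h, if_neg h]
    have hd0 : (EB.den x y : ℚ) ≠ 0 := by
      exact_mod_cast (EB.den_pos x y).ne'
    rw [Nat.cast_mul, Nat.cast_div (EB.den_dvd x y) hd0]
    show ((EB.num x y e : ℚ) / (EB.den x y)) * 6 = _
    field_simp
    norm_num

set_option maxRecDepth 100000 in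
set_option maxHeartbeats 40000000 in
lemma EB.S1 : EB.S s(0, 1) = 78 := by decide

set_option maxRecDepth 100000 in
set_option maxHeartbeats 40000000 in
lemma EB.S6 : EB.S s(0, 6) = 78 := by decide

lemma EB.base1 : EB.B s(0, 1) = 13 := by rw [EB.B_eq_S, EB.S1]; norm_num

lemma EB.base6 : EB.B s(0, 6) = 13 := by rw [EB.B_eq_S, EB.S6]; norm_num

/-- The translation automorphism of the circulant graph. -/
def EB.T (d : ZMod 15) : EB.G15 ≃g EB.G15 where
  toEquiv := Equiv.addRight d
  map_rel_iff' := by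
    intro a b
    simp only [Equiv.coe_addRight, EB.G15, circulantGraph, fromRel_adj]
    constructor
    · rintro ⟨h1, h2⟩
      refine ⟨fun hc => h1 (by rw [hc]), ?_⟩
      simpa [add_sub_add_right_eq_sub] using h2
    · rintro ⟨h1, h2⟩
      refine ⟨fun hc => h1 (by simpa using hc), ?_⟩
      simpa [add_sub_add_right_eq_sub] using h2

lemma EB.translate (d : ZMod 15) (e : Sym2 (ZMod 15)) :
    edgeBetweenness EB.G15 (Sym2.map (· + d) e) = edgeBetweenness EB.G15 e := by
  have h := EB.betweenness_map (EB.T d) e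
  have hfun : (⇑(EB.T d)) = (fun x => x + d) := rfl
  rw [hfun] at h
  exact h

lemma EB.edge_val (a b : ZMod 15) (h : EB.G15.Adj a b) :
    edgeBetweenness EB.G15 s(a, b) = 13 := by
  have hadj : a ≠ b ∧ (a - b ∈ EB.s15 ∨ b - a ∈ EB.s15) := h
  have h1 : edgeBetweenness EB.G15 s(0, 1) = 13 := by
    rw [EB.betweenness_eq]; exact EB.base1
  have h6 : edgeBetweenness EB.G15 s(0, 6) = 13 := by
    rw [EB.betweenness_eq]; exact EB.base6
  have hcases : b - a = 1 ∨ b - a = -1 ∨ b - a = 6 ∨ b - a = -6 := by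
    rcases hadj.2 with h2 | h2 <;> simp only [EB.s15, Set.mem_insert_iff,
      Set.mem_singleton_iff] at h2 <;> rcases h2 with h2 | h2 | h2 | h2
    · right; left; rw [← neg_sub, h2]
    · left; rw [← neg_sub, h2]; decide
    · right; right; right; rw [← neg_sub, h2]
    · right; right; left; rw [← neg_sub, h2]; decide
    · left; exact h2
    · right; left; exact h2
    · right; right; left; exact h2
    · right; right; right; exact h2
  rcases hcases with hc | hc | hc | hc
  · have hb : b = a + 1 := by rw [← sub_add_cancel b a, hc, add_comm]
    have : s(a, b) = Sym2.map (· + a) s((0 : ZMod 15), 1) := by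
      simp [Sym2.map_pair_eq, hb, add_comm]
    rw [this, EB.translate, h1]
  · have hb : a = b + 1 := by
      have : a - b = 1 := by rw [← neg_sub, hc]; decide
      rw [← sub_add_cancel a b, this, add_comm]
    have : s(a, b) = Sym2.map (· + b) s((0 : ZMod 15), 1) := by
      rw [Sym2.eq_swap]; simp [Sym2.map_pair_eq, hb, add_comm]
    rw [this, EB.translate, h1]
  · have hb : b = a + 6 := by rw [← sub_add_cancel b a, hc, add_comm]
    have : s(a, b) = Sym2.map (· + a) s((0 : ZMod 15), 6) := by
      simp [Sym2.map_pair_eq, hb, add_comm]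
    rw [this, EB.translate, h6]
  · have hb : a = b + 6 := by
      have : a - b = 6 := by rw [← neg_sub, hc]; decide
      rw [← sub_add_cancel a b, this, add_comm]
    have : s(a, b) = Sym2.map (· + b) s((0 : ZMod 15), 6) := by
      rw [Sym2.eq_swap]; simp [Sym2.map_pair_eq, hb, add_comm]
    rw [this, EB.translate, h6]

theorem stmt16 :
    (∀ e ∈ (circulantGraph ({1, -1, 6, -6} : Set (ZMod 15))).edgeSet,
      edgeBetweenness (circulantGraph ({1, -1, 6, -6} : Set (ZMod 15))) e = 13) ∧
    (∀ e₁ ∈ (circulantGraph ({1, -1, 6, -6} : Set (ZMod 15))).edgeSet,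
     ∀ e₂ ∈ (circulantGraph ({1, -1, 6, -6} : Set (ZMod 15))).edgeSet,
      edgeBetweenness (circulantGraph ({1, -1, 6, -6} : Set (ZMod 15))) e₁ =
        edgeBetweenness (circulantGraph ({1, -1, 6, -6} : Set (ZMod 15))) e₂) := by
  have hG : (circulantGraph ({1, -1, 6, -6} : Set (ZMod 15))) = EB.G15 := rfl
  have main : ∀ e ∈ EB.G15.edgeSet, edgeBetweenness EB.G15 e = 13 := by
    intro e he
    induction e using Sym2.ind with
    | _ a b =>
      rw [SimpleGraph.mem_edgeSet] at he
      exact EB.edge_val a b he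
  rw [hG]
  exact ⟨main, fun e₁ h₁ e₂ h₂ => by rw [main e₁ h₁, main e₂ h₂]⟩
end
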